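/- arXiv:2512.08460 — 2 statements merged into one kernel-verified Lean document; each statement's English description precedes it below -/
import Mathlib

section
/- Suppose that for each ρ ∈ (0,1], Ψ_ρ : Ω → ℂ is analytic on Ω and satisfies Ψ_ρ(z) = φ^{(ρ)}(z)/φ(z) for all z ∈ Ω ∖ (S + Λ), where φ^{(ρ)}(z) = ∑_{m∈Λ} 2^{−ρ|m|} ϕ(z − m). Then: (a) there exists C > 0 such that |Ψ_ρ(z)| ≤ C for every ρ ∈ (0,1] and every z ∈ Ω; and (b) for every M ≥ 1 and every ε > 0 there exists ρ₀ > 0 such that |Ψ_ρ(z) − 1| ≤ ε for every ρ ∈ (0, ρ₀) and every z ∈ Ω with |Re z| ≤ M and |Im z| ≤ M. -/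
open Complex MeasureTheory Set Filter Topology

set_option maxHeartbeats 1000000

noncomputable section

/-- The Gaussian integer lattice point associated to a pair of integers. -/
def latPt (p : ℤ × ℤ) : ℂ := (p.1 : ℂ) + (p.2 : ℂ) * Complex.I

/-- The open unit square `Q = (0,1) × (0,1)` in `ℂ`. -/
def QSet : Set ℂ := {z : ℂ | z.re ∈ Set.Ioo (0:ℝ) 1 ∧ z.im ∈ Set.Ioo (0:ℝ) 1}

/-- The set `S + Λ` of all translates of points of `S` by lattice points. -/
def SLat (S : Finset ℂ) : Set ℂ := {z : ℂ | ∃ s ∈ S, ∃ p : ℤ × ℤ, z = s + latPt p}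

lemma latPt_re (p : ℤ × ℤ) : (latPt p).re = p.1 := by simp [latPt]
lemma latPt_im (p : ℤ × ℤ) : (latPt p).im = p.2 := by simp [latPt]

lemma latPt_sub (p q : ℤ × ℤ) : latPt (p - q) = latPt p - latPt q := by
  simp [latPt]; push_cast; ring

lemma latPt_add (p q : ℤ × ℤ) : latPt (p + q) = latPt p + latPt q := by
  simp [latPt]; push_cast; ring

lemma latPt_neg (p : ℤ × ℤ) : latPt (-p) = - latPt p := by
  simp [latPt]; push_cast; ring

lemma abs_latPt_le (p : ℤ × ℤ) : ‖latPt p‖ ≤ |(p.1:ℝ)| + |(p.2:ℝ)| := by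
  simpa [latPt_re, latPt_im] using Complex.norm_le_abs_re_add_abs_im (latPt p)

lemma abs_fst_le (p : ℤ × ℤ) : |(p.1:ℝ)| ≤ ‖latPt p‖ := by
  simpa [latPt_re] using Complex.abs_re_le_norm (latPt p)

lemma abs_snd_le (p : ℤ × ℤ) : |(p.2:ℝ)| ≤ ‖latPt p‖ := by
  simpa [latPt_im] using Complex.abs_im_le_norm (latPt p)

lemma sq_abs_latPt (p : ℤ × ℤ) :
    (‖latPt p‖)^2 = ((p.1:ℝ))^2 + ((p.2:ℝ))^2 := by
  rw [Complex.sq_norm]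
  simp only [Complex.normSq_apply, latPt_re, latPt_im]
  ring

lemma exists_big_coord {q : ℤ × ℤ} (h : 3 ≤ ‖latPt q‖) :
    (3:ℝ) ≤ |(q.1:ℝ)| ∨ (3:ℝ) ≤ |(q.2:ℝ)| := by
  by_contra h'
  push_neg at h'
  obtain ⟨h1, h2⟩ := h'
  have e1 : |(q.1:ℝ)| ≤ 2 := by
    have : |q.1| < 3 := by exact_mod_cast (by simpa using h1 : |(q.1:ℝ)| < 3)
    have : |q.1| ≤ 2 := by omega
    exact_mod_cast this
  have e2 : |(q.2:ℝ)| ≤ 2 := by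
    have : |q.2| < 3 := by exact_mod_cast (by simpa using h2 : |(q.2:ℝ)| < 3)
    have : |q.2| ≤ 2 := by omega
    exact_mod_cast this
  have := sq_abs_latPt q
  nlinarith [_root_.sq_abs ((q.1:ℝ)), _root_.sq_abs ((q.2:ℝ)), abs_nonneg ((q.1:ℝ)), abs_nonneg ((q.2:ℝ)),
    norm_nonneg (latPt q)]

/-- the dominating function. -/
def gfun (b d K₂ : ℝ) (q : ℤ × ℤ) : ℝ :=
  if ‖latPt q‖ < 3 then K₂ else d * (‖latPt q‖ - 1) ^ (-b)

lemma gfun_nonneg {b d K₂ : ℝ} (hd : 0 ≤ d) (hK₂ : 0 ≤ K₂) (q : ℤ × ℤ) :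
    0 ≤ gfun b d K₂ q := by
  unfold gfun
  split
  · exact hK₂
  · next h =>
      exact mul_nonneg hd (Real.rpow_nonneg (by linarith [not_lt.mp h]) _)

lemma gfun_summable {b d K₂ : ℝ} (hb : 2 < b) (hd : 0 ≤ d) (hK₂ : 0 ≤ K₂) :
    Summable (gfun b d K₂) := by
  classical
  set s : Set (ℤ × ℤ) := {q | ‖latPt q‖ < 3} with hs
  have hsfin : s.Finite := by
    apply Set.Finite.subset (Set.finite_Icc ((-3, -3) : ℤ × ℤ) (3, 3))
    intro q hq
    have h1 : |(q.1:ℝ)| ≤ 3 := (abs_fst_le q).trans (le_of_lt hq)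
    have h2 : |(q.2:ℝ)| ≤ 3 := (abs_snd_le q).trans (le_of_lt hq)
    have h1' : |q.1| ≤ 3 := by exact_mod_cast h1
    have h2' : |q.2| ≤ 3 := by exact_mod_cast h2
    rw [abs_le] at h1' h2'
    simp only [Set.mem_Icc, Prod.le_def]
    omega
  rw [← hsfin.summable_compl_iff]
  have hsum : Summable (fun q : ℤ × ℤ => (d * 2 ^ b) * ‖(finTwoArrowEquiv ℤ).symm q‖ ^ (-b)) := by
    apply Summable.mul_left
    exact ((finTwoArrowEquiv ℤ).symm.summable_iff).mpr
      (EisensteinSeries.summable_one_div_norm_rpow hb)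
  apply Summable.of_nonneg_of_le (fun q => gfun_nonneg hd hK₂ _)
    (fun q => ?_) (hsum.subtype _)
  obtain ⟨q, hq⟩ := q
  have hq3 : 3 ≤ ‖latPt q‖ := by
    simpa [hs, not_lt] using hq
  have hN : ‖(finTwoArrowEquiv ℤ).symm q‖ = max |(q.1:ℝ)| |(q.2:ℝ)| := by
    rw [finTwoArrowEquiv_symm_apply, EisensteinSeries.norm_eq_max_natAbs]
    push_cast [Nat.cast_natAbs]
    simp
  set N : ℝ := ‖(finTwoArrowEquiv ℤ).symm q‖ with hNdef
  have hN3 : (3:ℝ) ≤ N := by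
    rw [hN]
    rcases exists_big_coord hq3 with h | h
    · exact le_max_of_le_left h
    · exact le_max_of_le_right h
  have hNle : N ≤ ‖latPt q‖ := by
    rw [hN]
    exact max_le (abs_fst_le q) (abs_snd_le q)
  have hgq : gfun b d K₂ q = d * (‖latPt q‖ - 1) ^ (-b) := by
    unfold gfun
    rw [if_neg (not_lt.mpr hq3)]
  rw [hgq]
  have hb0 : (0:ℝ) ≤ b := by linarith
  have key : (‖latPt q‖ - 1) ^ (-b) ≤ (N / 2) ^ (-b) := by
    apply Real.rpow_le_rpow_of_nonpos (by linarith) (by linarith) (by linarith)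
  have h2 : (N / 2 : ℝ) ^ (-b) = 2 ^ b * N ^ (-b) := by
    rw [Real.div_rpow (by linarith) (by norm_num), Real.rpow_neg (by norm_num : (0:ℝ) ≤ 2)]
    field_simp
  calc d * (‖latPt q‖ - 1) ^ (-b) ≤ d * ((N / 2) ^ (-b)) := by
        apply mul_le_mul_of_nonneg_left key hd
    _ = d * 2 ^ b * N ^ (-b) := by rw [h2]; ring

lemma coef_le_one {ρ x : ℝ} (hρ : 0 ≤ ρ) (hx : 0 ≤ x) :
    (2:ℝ) ^ (-(ρ * x)) ≤ 1 :=
  Real.rpow_le_one_of_one_le_of_nonpos one_le_two (neg_nonpos.mpr (mul_nonneg hρ hx))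

lemma coef_nonneg (ρ x : ℝ) : (0:ℝ) ≤ (2:ℝ) ^ (-(ρ * x)) :=
  Real.rpow_nonneg (by norm_num) _

lemma one_sub_coef_le {ρ x : ℝ} (hρ : 0 ≤ ρ) (hx : 0 ≤ x) :
    1 - (2:ℝ) ^ (-(ρ * x)) ≤ ρ * x := by
  rw [Real.rpow_def_of_pos (by norm_num : (0:ℝ) < 2)]
  have h1 : 1 - Real.exp (Real.log 2 * -(ρ * x)) ≤ -(Real.log 2 * -(ρ * x)) := by
    have := Real.add_one_le_exp (Real.log 2 * -(ρ * x))
    linarith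
  have hlog : Real.log 2 ≤ 1 := by
    have := Real.log_le_sub_one_of_pos (by norm_num : (0:ℝ) < 2)
    linarith
  have hlog0 : 0 ≤ Real.log 2 := Real.log_nonneg one_le_two
  nlinarith [mul_nonneg hρ hx]

lemma decay_bound {b d t x a : ℝ} (hb0 : 0 ≤ b) (h : (1 + t) ^ b * a ≤ d) (ha : 0 ≤ a)
    (hx : 0 < x) (hxt : x ≤ 1 + t) : a ≤ d * x ^ (-b) := by
  have h1 : x ^ b ≤ (1 + t) ^ b := Real.rpow_le_rpow hx.le hxt hb0
  have h2 : (0:ℝ) < x ^ b := Real.rpow_pos_of_pos hx b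
  rw [Real.rpow_neg hx.le, ← div_eq_mul_inv, le_div_iff₀ h2]
  calc a * x ^ b ≤ a * (1 + t) ^ b := mul_le_mul_of_nonneg_left h1 ha
    _ = (1 + t) ^ b * a := mul_comm _ _
    _ ≤ d := h

lemma closure_QSet_subset :
    closure QSet ⊆ {z : ℂ | z.re ∈ Set.Icc (0:ℝ) 1 ∧ z.im ∈ Set.Icc (0:ℝ) 1} := by
  apply closure_minimal
  · intro z hz
    exact ⟨⟨hz.1.1.le, hz.1.2.le⟩, ⟨hz.2.1.le, hz.2.2.le⟩⟩
  · have : {z : ℂ | z.re ∈ Set.Icc (0:ℝ) 1 ∧ z.im ∈ Set.Icc (0:ℝ) 1}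
        = Complex.re ⁻¹' (Set.Icc 0 1) ∩ Complex.im ⁻¹' (Set.Icc 0 1) := rfl
    rw [this]
    exact (isClosed_Icc.preimage Complex.continuous_re).inter
      (isClosed_Icc.preimage Complex.continuous_im)

lemma key_bound
    (Ω : Set ℂ) (hper : ∀ z ∈ Ω, ∀ p : ℤ × ℤ, z + latPt p ∈ Ω)
    (S : Finset ℂ) (ϕ : ℂ → ℂ) (b d δ K₂ : ℝ)
    (hb : 2 < b) (hd : 0 ≤ d) (hδ : 0 < δ)
    (hSδ : ∀ s ∈ S, δ ≤ s.re ∧ s.re + δ ≤ 1 ∧ δ ≤ s.im ∧ s.im + δ ≤ 1)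
    (hK₂ : ∀ w : ℂ, ‖w‖ ≤ 5 → (∀ s ∈ S, δ ≤ ‖w - s‖) →
      ‖ϕ w‖ ≤ K₂)
    (hdecay : ∀ z ∈ Ω, z ∉ closure QSet → (1 + ‖z‖) ^ b * ‖ϕ z‖ ≤ d)
    (z : ℂ) (hz : z ∈ Ω) (m : ℤ × ℤ) (hm : m ≠ (⌊z.re⌋, ⌊z.im⌋)) :
    ‖ϕ (z - latPt m)‖ ≤ gfun b d K₂ (m - (⌊z.re⌋, ⌊z.im⌋)) := by
  set n : ℤ × ℤ := (⌊z.re⌋, ⌊z.im⌋) with hn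
  set q : ℤ × ℤ := m - n with hqdef
  have hq0 : q ≠ 0 := sub_ne_zero.mpr hm
  set w : ℂ := z - latPt n with hw
  have hzm : z - latPt m = w - latPt q := by
    rw [hw, hqdef, latPt_sub]; ring
  have hwre0 : 0 ≤ w.re := by
    simp only [hw, Complex.sub_re, latPt_re, hn]
    have := Int.floor_le z.re
    linarith
  have hwre1 : w.re < 1 := by
    simp only [hw, Complex.sub_re, latPt_re, hn]
    have := Int.lt_floor_add_one z.re
    linarith
  have hwim0 : 0 ≤ w.im := by
    simp only [hw, Complex.sub_im, latPt_im, hn]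
    have := Int.floor_le z.im
    linarith
  have hwim1 : w.im < 1 := by
    simp only [hw, Complex.sub_im, latPt_im, hn]
    have := Int.lt_floor_add_one z.im
    linarith
  have habsw : ‖w‖ ≤ 2 := by
    refine (Complex.norm_le_abs_re_add_abs_im w).trans ?_
    rw [_root_.abs_of_nonneg hwre0, _root_.abs_of_nonneg hwim0]
    linarith
  have hmemΩ : w - latPt q ∈ Ω := by
    rw [← hzm]
    have := hper z hz (-m)
    rwa [latPt_neg, ← sub_eq_add_neg] at this
  rw [hzm]
  unfold gfun
  by_cases hlt : ‖latPt q‖ < 3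
  · rw [if_pos hlt]
    apply hK₂
    · calc ‖w - latPt q‖ ≤ ‖w‖ + ‖latPt q‖ := by
            simpa using norm_sub_le w (latPt q)
        _ ≤ 2 + 3 := by linarith
        _ = 5 := by norm_num
    · intro s hs
      obtain ⟨hs1, hs2, hs3, hs4⟩ := hSδ s hs
      have hcases : q.1 ≠ 0 ∨ q.2 ≠ 0 := by
        by_contra hc
        push_neg at hc
        exact hq0 (Prod.ext hc.1 hc.2)
      have hre : (w - latPt q - s).re = w.re - q.1 - s.re := by
        simp [Complex.sub_re, latPt_re]
      have him : (w - latPt q - s).im = w.im - q.2 - s.im := by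
        simp [Complex.sub_im, latPt_im]
      rcases hcases with hq1 | hq2
      · refine le_trans ?_ (Complex.abs_re_le_norm _)
        rw [hre]
        rcases lt_or_gt_of_ne hq1 with hneg | hpos
        · have h' : q.1 ≤ -1 := by omega
          have : (q.1 : ℝ) ≤ -1 := by exact_mod_cast h'
          rw [_root_.abs_of_nonneg (by linarith)]; linarith
        · have h' : (1:ℤ) ≤ q.1 := hpos
          have : (1:ℝ) ≤ (q.1 : ℝ) := by exact_mod_cast h'
          rw [_root_.abs_of_nonpos (by linarith)]; linarith
      · refine le_trans ?_ (Complex.abs_im_le_norm _)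
        rw [him]
        rcases lt_or_gt_of_ne hq2 with hneg | hpos
        · have h' : q.2 ≤ -1 := by omega
          have : (q.2 : ℝ) ≤ -1 := by exact_mod_cast h'
          rw [_root_.abs_of_nonneg (by linarith)]; linarith
        · have h' : (1:ℤ) ≤ q.2 := hpos
          have : (1:ℝ) ≤ (q.2 : ℝ) := by exact_mod_cast h'
          rw [_root_.abs_of_nonpos (by linarith)]; linarith
  · rw [if_neg hlt]
    push_neg at hlt
    have hnotQ : w - latPt q ∉ closure QSet := by
      intro hcl
      have hmem := closure_QSet_subset hcl
      obtain ⟨⟨hr0, hr1⟩, ⟨hi0, hi1⟩⟩ := hmem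
      have hre : (w - latPt q).re = w.re - q.1 := by simp [Complex.sub_re, latPt_re]
      have him : (w - latPt q).im = w.im - q.2 := by simp [Complex.sub_im, latPt_im]
      rcases exists_big_coord hlt with h | h
      · rw [hre] at hr0 hr1
        rcases abs_cases ((q.1:ℝ)) with ⟨he, _⟩ | ⟨he, _⟩ <;> rw [he] at h <;> linarith
      · rw [him] at hi0 hi1
        rcases abs_cases ((q.2:ℝ)) with ⟨he, _⟩ | ⟨he, _⟩ <;> rw [he] at h <;> linarith
    have hdec := hdecay (w - latPt q) hmemΩ hnotQ
    have hlow : ‖latPt q‖ - 2 ≤ ‖w - latPt q‖ := by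
      have h1 : ‖latPt q‖ - ‖w‖ ≤ ‖latPt q - w‖ := by
        simpa using norm_sub_norm_le (latPt q) w
      have h2 : ‖latPt q - w‖ = ‖w - latPt q‖ := by
        simpa using norm_sub_rev (latPt q) w
      linarith
    exact decay_bound (by linarith) hdec (norm_nonneg _) (by linarith) (by linarith)
/-- weighted dominating function for part (b). -/
def Pfun (ρ L : ℝ) (g : ℤ × ℤ → ℝ) (q : ℤ × ℤ) : ℝ :=
  if q = 0 then 0 else min 1 (ρ * (L + ‖latPt q‖)) * g q

lemma Pfun_zero (ρ L : ℝ) (g : ℤ × ℤ → ℝ) : Pfun ρ L g 0 = 0 := by simp [Pfun]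

lemma Pfun_ne {q : ℤ × ℤ} (hq : q ≠ 0) (ρ L : ℝ) (g : ℤ × ℤ → ℝ) :
    Pfun ρ L g q = min 1 (ρ * (L + ‖latPt q‖)) * g q := by
  simp [Pfun, hq]

lemma corA
    (ϕ : ℂ → ℂ) (g : ℤ × ℤ → ℝ) (K c ρ : ℝ) (z : ℂ)
    (hρ0 : 0 < ρ) (hc : 0 < c)
    (hgsum : Summable g) (hgnn : ∀ q, 0 ≤ g q) (hK : K = ∑' q, g q)
    (hkey : ∀ m : ℤ × ℤ, m ≠ (⌊z.re⌋, ⌊z.im⌋) →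
      ‖ϕ (z - latPt m)‖ ≤ g (m - (⌊z.re⌋, ⌊z.im⌋)))
    (hAs : Summable (fun m : ℤ × ℤ => ‖ϕ (z - latPt m)‖))
    (hφc : c ≤ ‖∑' m : ℤ × ℤ, ϕ (z - latPt m)‖) :
    ‖(∑' m : ℤ × ℤ,
        Complex.ofReal ((2:ℝ) ^ (-(ρ * ‖latPt m‖))) * ϕ (z - latPt m))
      / (∑' m : ℤ × ℤ, ϕ (z - latPt m))‖ ≤ 1 + 2 * K / c := by
  classical
  set n : ℤ × ℤ := (⌊z.re⌋, ⌊z.im⌋) with hn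
  have hK0 : 0 ≤ K := hK ▸ tsum_nonneg hgnn
  have hgsh : Summable (fun m : ℤ × ℤ => g (m - n)) :=
    (Equiv.subRight n).summable_iff.mpr hgsum
  have hgshsum : ∑' m : ℤ × ℤ, g (m - n) = K := by
    rw [hK]; exact (Equiv.subRight n).tsum_eq g
  have S1 : Summable (fun m : ℤ × ℤ => ϕ (z - latPt m)) := by
    apply Summable.of_norm
    simpa using hAs
  have S2 : Summable (fun m : ℤ × ℤ =>
      Complex.ofReal ((2:ℝ) ^ (-(ρ * ‖latPt m‖))) * ϕ (z - latPt m)) := by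
    apply Summable.of_norm_bounded hAs
    intro m
    rw [norm_mul, Complex.norm_real]
    have h1 : ‖(2:ℝ) ^ (-(ρ * ‖latPt m‖))‖ ≤ 1 := by
      rw [Real.norm_eq_abs, _root_.abs_of_nonneg (coef_nonneg _ _)]
      exact coef_le_one hρ0.le (norm_nonneg _)
    exact mul_le_of_le_one_left (norm_nonneg _) h1
  have tail_bound : ∀ f : ℤ × ℤ → ℂ,
      (∀ m, m ≠ n → ‖f m‖ ≤ ‖ϕ (z - latPt m)‖) →
      ‖∑' m, if m = n then (0:ℂ) else f m‖ ≤ K := by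
    intro f hf
    calc ‖∑' m, if m = n then (0:ℂ) else f m‖
        ≤ ∑' m : ℤ × ℤ, g (m - n) := by
          apply tsum_of_norm_bounded hgsh.hasSum
          intro m
          by_cases h : m = n
          · simpa [h] using hgnn _
          · rw [if_neg h]
            exact (hf m h).trans (hkey m h)
      _ = K := hgshsum
  set φz : ℂ := ∑' m : ℤ × ℤ, ϕ (z - latPt m) with hφz
  have hpos : 0 < ‖φz‖ := lt_of_lt_of_le hc hφc
  have han : ‖ϕ (z - latPt n)‖ ≤ ‖φz‖ + K := by
    have h1 : ϕ (z - latPt n) = φz - ∑' m, if m = n then (0:ℂ) else ϕ (z - latPt m) := by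
      rw [hφz, S1.tsum_eq_add_tsum_ite n]; ring
    rw [h1]
    have h2 : ‖φz - ∑' m, if m = n then (0:ℂ) else ϕ (z - latPt m)‖
        ≤ ‖φz‖ + ‖∑' m, if m = n then (0:ℂ) else ϕ (z - latPt m)‖ := by
      simpa using
        norm_sub_le φz (∑' m, if m = n then (0:ℂ) else ϕ (z - latPt m))
    have h3 := tail_bound (fun m => ϕ (z - latPt m)) (fun m _ => le_rfl)
    linarith
  rw [norm_div]
  have hnum : ‖∑' m : ℤ × ℤ,
      Complex.ofReal ((2:ℝ) ^ (-(ρ * ‖latPt m‖))) * ϕ (z - latPt m)‖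
      ≤ ‖φz‖ + 2 * K := by
    rw [S2.tsum_eq_add_tsum_ite n]
    have hterm : ‖Complex.ofReal ((2:ℝ) ^ (-(ρ * ‖latPt n‖)))
        * ϕ (z - latPt n)‖ ≤ ‖ϕ (z - latPt n)‖ := by
      rw [norm_mul, Complex.norm_real, Real.norm_eq_abs, _root_.abs_of_nonneg (coef_nonneg _ _)]
      exact mul_le_of_le_one_left (norm_nonneg _)
        (coef_le_one hρ0.le (norm_nonneg _))
    have htail := tail_bound
      (fun m => Complex.ofReal ((2:ℝ) ^ (-(ρ * ‖latPt m‖))) * ϕ (z - latPt m))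
      (fun m _ => by
        rw [norm_mul, Complex.norm_real, Real.norm_eq_abs, _root_.abs_of_nonneg (coef_nonneg _ _)]
        exact mul_le_of_le_one_left (norm_nonneg _)
          (coef_le_one hρ0.le (norm_nonneg _)))
    have htri : ‖Complex.ofReal ((2:ℝ) ^ (-(ρ * ‖latPt n‖)))
          * ϕ (z - latPt n) + ∑' m, if m = n then (0:ℂ) else
          Complex.ofReal ((2:ℝ) ^ (-(ρ * ‖latPt m‖))) * ϕ (z - latPt m)‖
        ≤ ‖Complex.ofReal ((2:ℝ) ^ (-(ρ * ‖latPt n‖)))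
          * ϕ (z - latPt n)‖ + ‖∑' m, if m = n then (0:ℂ) else
          Complex.ofReal ((2:ℝ) ^ (-(ρ * ‖latPt m‖))) * ϕ (z - latPt m)‖ :=
      norm_add_le _ _
    linarith
  calc ‖∑' m : ℤ × ℤ,
        Complex.ofReal ((2:ℝ) ^ (-(ρ * ‖latPt m‖))) * ϕ (z - latPt m)‖
        / ‖φz‖
      ≤ (‖φz‖ + 2 * K) / ‖φz‖ := (div_le_div_iff_of_pos_right hpos).mpr hnum
    _ = 1 + 2 * K / ‖φz‖ := by
        rw [add_div, div_self (ne_of_gt hpos)]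
    _ ≤ 1 + 2 * K / c := by
        have h2 : 2 * K / ‖φz‖ ≤ 2 * K / c := by
          rw [div_le_div_iff₀ hpos hc]
          nlinarith
        linarith

lemma corB
    (ϕ : ℂ → ℂ) (g : ℤ × ℤ → ℝ) (K c ρ L ε₁ B : ℝ) (F : Finset (ℤ × ℤ)) (z : ℂ)
    (hρ0 : 0 < ρ) (hc : 0 < c) (hL0 : 0 < L) (hε₁ : 0 < ε₁)
    (hgsum : Summable g) (hgnn : ∀ q, 0 ≤ g q) (hK : K = ∑' q, g q)
    (hkey : ∀ m : ℤ × ℤ, m ≠ (⌊z.re⌋, ⌊z.im⌋) →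
      ‖ϕ (z - latPt m)‖ ≤ g (m - (⌊z.re⌋, ⌊z.im⌋)))
    (hAs : Summable (fun m : ℤ × ℤ => ‖ϕ (z - latPt m)‖))
    (hφc : c ≤ ‖∑' m : ℤ × ℤ, ϕ (z - latPt m)‖)
    (hF : K - ε₁ < ∑ q ∈ F, g q)
    (hB : B = ∑ q ∈ F, (L + ‖latPt q‖) * g q)
    (hnlat : ‖latPt ((⌊z.re⌋, ⌊z.im⌋) : ℤ × ℤ)‖ ≤ L) :
    ‖(∑' m : ℤ × ℤ,
        Complex.ofReal ((2:ℝ) ^ (-(ρ * ‖latPt m‖))) * ϕ (z - latPt m))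
      / (∑' m : ℤ × ℤ, ϕ (z - latPt m)) - 1‖
      ≤ ρ * L + (ρ * L * K + ρ * B + ε₁) / c := by
  classical
  set n : ℤ × ℤ := (⌊z.re⌋, ⌊z.im⌋) with hn
  have hK0 : 0 ≤ K := hK ▸ tsum_nonneg hgnn
  have hgsh : Summable (fun m : ℤ × ℤ => g (m - n)) :=
    (Equiv.subRight n).summable_iff.mpr hgsum
  have hgshsum : ∑' m : ℤ × ℤ, g (m - n) = K := by
    rw [hK]; exact (Equiv.subRight n).tsum_eq g
  have S1 : Summable (fun m : ℤ × ℤ => ϕ (z - latPt m)) := by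
    apply Summable.of_norm
    simpa using hAs
  have S2 : Summable (fun m : ℤ × ℤ =>
      Complex.ofReal ((2:ℝ) ^ (-(ρ * ‖latPt m‖))) * ϕ (z - latPt m)) := by
    apply Summable.of_norm_bounded hAs
    intro m
    rw [norm_mul, Complex.norm_real]
    have h1 : ‖(2:ℝ) ^ (-(ρ * ‖latPt m‖))‖ ≤ 1 := by
      rw [Real.norm_eq_abs, _root_.abs_of_nonneg (coef_nonneg _ _)]
      exact coef_le_one hρ0.le (norm_nonneg _)
    exact mul_le_of_le_one_left (norm_nonneg _) h1
  set φz : ℂ := ∑' m : ℤ × ℤ, ϕ (z - latPt m) with hφz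
  have hpos : 0 < ‖φz‖ := lt_of_lt_of_le hc hφc
  have hφ0 : φz ≠ 0 := by
    intro h
    rw [h, norm_zero] at hpos
    exact lt_irrefl _ hpos
  have tail_bound : ∀ f : ℤ × ℤ → ℂ,
      (∀ m, m ≠ n → ‖f m‖ ≤ ‖ϕ (z - latPt m)‖) →
      ‖∑' m, if m = n then (0:ℂ) else f m‖ ≤ K := by
    intro f hf
    calc ‖∑' m, if m = n then (0:ℂ) else f m‖
        ≤ ∑' m : ℤ × ℤ, g (m - n) := by
          apply tsum_of_norm_bounded hgsh.hasSum
          intro m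
          by_cases h : m = n
          · simpa [h] using hgnn _
          · rw [if_neg h]
            exact (hf m h).trans (hkey m h)
      _ = K := hgshsum
  have han : ‖ϕ (z - latPt n)‖ ≤ ‖φz‖ + K := by
    have h1 : ϕ (z - latPt n) = φz - ∑' m, if m = n then (0:ℂ) else ϕ (z - latPt m) := by
      rw [hφz, S1.tsum_eq_add_tsum_ite n]; ring
    rw [h1]
    have h2 : ‖φz - ∑' m, if m = n then (0:ℂ) else ϕ (z - latPt m)‖
        ≤ ‖φz‖ + ‖∑' m, if m = n then (0:ℂ) else ϕ (z - latPt m)‖ := by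
      simpa using
        norm_sub_le φz (∑' m, if m = n then (0:ℂ) else ϕ (z - latPt m))
    have h3 := tail_bound (fun m => ϕ (z - latPt m)) (fun m _ => le_rfl)
    linarith
  have hcabs : ∀ m : ℤ × ℤ,
      ‖Complex.ofReal ((2:ℝ) ^ (-(ρ * ‖latPt m‖))) - 1‖
      ≤ min 1 (ρ * ‖latPt m‖) := by
    intro m
    have h0 : Complex.ofReal ((2:ℝ) ^ (-(ρ * ‖latPt m‖))) - 1
        = Complex.ofReal ((2:ℝ) ^ (-(ρ * ‖latPt m‖)) - 1) := by
      push_cast; ring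
    rw [h0, Complex.norm_real, Real.norm_eq_abs]
    have hcle := coef_le_one hρ0.le (norm_nonneg (latPt m))
    have hcnn := coef_nonneg ρ (‖latPt m‖)
    have hub := one_sub_coef_le hρ0.le (norm_nonneg (latPt m))
    rw [abs_of_nonpos (by linarith)]
    exact le_min (by linarith) (by linarith)
  have hmin_nn : ∀ q : ℤ × ℤ, 0 ≤ min 1 (ρ * (L + ‖latPt q‖)) := by
    intro q
    apply le_min (by norm_num)
    have : 0 ≤ L + ‖latPt q‖ := add_nonneg hL0.le (norm_nonneg _)
    exact mul_nonneg hρ0.le this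
  have hPnn : ∀ q, 0 ≤ Pfun ρ L g q := by
    intro q
    by_cases hq : q = 0
    · rw [hq, Pfun_zero]
    · rw [Pfun_ne hq]
      exact mul_nonneg (hmin_nn q) (hgnn q)
  have hPle : ∀ q, Pfun ρ L g q ≤ g q := by
    intro q
    by_cases hq : q = 0
    · rw [hq, Pfun_zero]; exact hgnn 0
    · rw [Pfun_ne hq]
      calc min 1 (ρ * (L + ‖latPt q‖)) * g q
          ≤ 1 * g q := mul_le_mul_of_nonneg_right (min_le_left _ _) (hgnn q)
        _ = g q := one_mul _
  have hPsum : Summable (Pfun ρ L g) := Summable.of_nonneg_of_le hPnn hPle hgsum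
  have hPtsum : ∑' q, Pfun ρ L g q ≤ ρ * B + ε₁ := by
    rw [← Summable.sum_add_tsum_subtype_compl hPsum F]
    have h1 : ∑ q ∈ F, Pfun ρ L g q ≤ ρ * B := by
      rw [hB, Finset.mul_sum]
      apply Finset.sum_le_sum
      intro q hq
      by_cases hq0 : q = 0
      · rw [hq0, Pfun_zero]
        have : 0 ≤ L + ‖latPt 0‖ := add_nonneg hL0.le (norm_nonneg _)
        exact mul_nonneg hρ0.le (mul_nonneg this (hgnn 0))
      · rw [Pfun_ne hq0]
        calc min 1 (ρ * (L + ‖latPt q‖)) * g q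
            ≤ (ρ * (L + ‖latPt q‖)) * g q :=
              mul_le_mul_of_nonneg_right (min_le_right _ _) (hgnn q)
          _ = ρ * ((L + ‖latPt q‖) * g q) := by ring
    have h2 : ∑' q : {x // x ∉ F}, Pfun ρ L g ↑q ≤ ε₁ := by
      have h3 : ∑' q : {x // x ∉ F}, Pfun ρ L g ↑q ≤ ∑' q : {x // x ∉ F}, g ↑q :=
        Summable.tsum_le_tsum (fun q => hPle q) (hPsum.subtype _) (hgsum.subtype _)
      have h4 : ∑ q ∈ F, g q + ∑' q : {x // x ∉ F}, g ↑q = K := by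
        rw [hK]; exact Summable.sum_add_tsum_subtype_compl hgsum F
      linarith
    linarith
  have S3 : Summable (fun m : ℤ × ℤ =>
      (Complex.ofReal ((2:ℝ) ^ (-(ρ * ‖latPt m‖))) - 1) * ϕ (z - latPt m)) := by
    have h := S2.sub S1
    apply h.congr
    intro m
    ring
  have hΨ1 : (∑' m : ℤ × ℤ,
      Complex.ofReal ((2:ℝ) ^ (-(ρ * ‖latPt m‖))) * ϕ (z - latPt m)) / φz - 1
      = (∑' m : ℤ × ℤ,
      (Complex.ofReal ((2:ℝ) ^ (-(ρ * ‖latPt m‖))) - 1) * ϕ (z - latPt m))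
      / φz := by
    rw [div_sub_one hφ0]
    congr 1
    rw [hφz, ← S2.tsum_sub S1]
    apply tsum_congr
    intro m
    ring
  rw [hΨ1, norm_div]
  have hnum : ‖∑' m : ℤ × ℤ,
      (Complex.ofReal ((2:ℝ) ^ (-(ρ * ‖latPt m‖))) - 1) * ϕ (z - latPt m)‖
      ≤ ρ * L * (‖φz‖ + K) + (ρ * B + ε₁) := by
    rw [S3.tsum_eq_add_tsum_ite n]
    have hterm1 : ‖(Complex.ofReal ((2:ℝ) ^ (-(ρ * ‖latPt n‖))) - 1)
        * ϕ (z - latPt n)‖ ≤ ρ * L * (‖φz‖ + K) := by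
      rw [norm_mul]
      have h1 := (hcabs n).trans (min_le_right _ _)
      have h2 : ρ * ‖latPt n‖ ≤ ρ * L :=
        mul_le_mul_of_nonneg_left hnlat hρ0.le
      have h4 : 0 ≤ ρ * L := mul_nonneg hρ0.le hL0.le
      exact mul_le_mul (h1.trans h2) han (norm_nonneg _) h4
    have htail : ‖∑' m, if m = n then (0:ℂ) else
        (Complex.ofReal ((2:ℝ) ^ (-(ρ * ‖latPt m‖))) - 1) * ϕ (z - latPt m)‖
        ≤ ρ * B + ε₁ := by
      have hPsh : Summable (fun m : ℤ × ℤ => Pfun ρ L g (m - n)) :=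
        (Equiv.subRight n).summable_iff.mpr hPsum
      have hPshsum : ∑' m : ℤ × ℤ, Pfun ρ L g (m - n) = ∑' q, Pfun ρ L g q :=
        (Equiv.subRight n).tsum_eq (Pfun ρ L g)
      calc ‖∑' m, if m = n then (0:ℂ) else
          (Complex.ofReal ((2:ℝ) ^ (-(ρ * ‖latPt m‖))) - 1) * ϕ (z - latPt m)‖
          ≤ ∑' m : ℤ × ℤ, Pfun ρ L g (m - n) := by
            apply tsum_of_norm_bounded hPsh.hasSum
            intro m
            by_cases h : m = n
            · simp [h, Pfun_zero]
            · rw [if_neg h, norm_mul]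
              have hq0 : m - n ≠ 0 := sub_ne_zero.mpr h
              rw [Pfun_ne hq0]
              have hco : ‖Complex.ofReal
                  ((2:ℝ) ^ (-(ρ * ‖latPt m‖))) - 1‖
                  ≤ min 1 (ρ * (L + ‖latPt (m - n)‖)) := by
                refine (hcabs m).trans (min_le_min le_rfl ?_)
                apply mul_le_mul_of_nonneg_left _ hρ0.le
                have hmrep : latPt m = latPt n + latPt (m - n) := by
                  rw [← latPt_add]
                  congr 1
                  ring
                rw [hmrep]
                calc ‖latPt n + latPt (m - n)‖
                    ≤ ‖latPt n‖ + ‖latPt (m - n)‖ :=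
                      norm_add_le _ _
                  _ ≤ L + ‖latPt (m - n)‖ := by linarith
              exact mul_le_mul hco (hkey m h) (norm_nonneg _) (hmin_nn _)
        _ = ∑' q, Pfun ρ L g q := hPshsum
        _ ≤ ρ * B + ε₁ := hPtsum
    have htri : ‖(Complex.ofReal ((2:ℝ) ^ (-(ρ * ‖latPt n‖))) - 1)
          * ϕ (z - latPt n) + ∑' m, if m = n then (0:ℂ) else
          (Complex.ofReal ((2:ℝ) ^ (-(ρ * ‖latPt m‖))) - 1) * ϕ (z - latPt m)‖
        ≤ ‖(Complex.ofReal ((2:ℝ) ^ (-(ρ * ‖latPt n‖))) - 1)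
          * ϕ (z - latPt n)‖ + ‖∑' m, if m = n then (0:ℂ) else
          (Complex.ofReal ((2:ℝ) ^ (-(ρ * ‖latPt m‖))) - 1)
          * ϕ (z - latPt m)‖ :=
      norm_add_le _ _
    linarith
  calc ‖∑' m : ℤ × ℤ,
        (Complex.ofReal ((2:ℝ) ^ (-(ρ * ‖latPt m‖))) - 1) * ϕ (z - latPt m)‖
        / ‖φz‖
      ≤ (ρ * L * (‖φz‖ + K) + (ρ * B + ε₁)) / ‖φz‖ :=
        (div_le_div_iff_of_pos_right hpos).mpr hnum
    _ = ρ * L + (ρ * L * K + ρ * B + ε₁) / ‖φz‖ := by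
        field_simp
        ring
    _ ≤ ρ * L + (ρ * L * K + ρ * B + ε₁) / c := by
        have h6 : (ρ * L * K + ρ * B + ε₁) / ‖φz‖
            ≤ (ρ * L * K + ρ * B + ε₁) / c := by
          rw [div_le_div_iff₀ hpos hc]
          have h7 : 0 ≤ ρ * L * K := mul_nonneg (mul_nonneg hρ0.le hL0.le) hK0
          have hB0 : 0 ≤ B := by
            rw [hB]
            exact Finset.sum_nonneg fun q _ =>
              mul_nonneg (add_nonneg hL0.le (norm_nonneg _)) (hgnn q)
          have h8 : 0 ≤ ρ * B := mul_nonneg hρ0.le hB0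
          nlinarith
        linarith

/-- uniform boundedness of the family `Ψ_ρ` on `Ω`, and uniform convergence `Ψ_ρ → 1` on bounded parts of `Ω` as `ρ → 0⁺`. -/
theorem stmt3
    (Ω : Set ℂ) (hΩopen : IsOpen Ω) (hΩne : Ω.Nonempty)
    (hper : ∀ z ∈ Ω, ∀ p : ℤ × ℤ, z + latPt p ∈ Ω)
    (S : Finset ℂ) (hSQ : (S : Set ℂ) ⊆ QSet)
    (ϕ : ℂ → ℂ) (hmero : MeromorphicOn ϕ Set.univ)
    (hana : AnalyticOnNhd ℂ ϕ ((S : Set ℂ)ᶜ))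
    (b d : ℝ) (hb : 2 < b) (hd : 0 ≤ d)
    (hdecay : ∀ z ∈ Ω, z ∉ closure QSet →
      (1 + ‖z‖) ^ b * ‖ϕ z‖ ≤ d)
    (hsum : ∀ z ∈ Ω \ SLat S,
      Summable (fun p : ℤ × ℤ => ‖ϕ (z - latPt p)‖))
    (hnz : ∀ z ∈ closure Ω \ SLat S, (∑' p : ℤ × ℤ, ϕ (z - latPt p)) ≠ 0)
    (hlb : ∃ c > (0:ℝ), ∀ z ∈ Ω \ SLat S,
      c ≤ ‖∑' p : ℤ × ℤ, ϕ (z - latPt p)‖)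
    (Ψ : ℝ → ℂ → ℂ)
    (hΨana : ∀ ρ ∈ Set.Ioc (0:ℝ) 1, AnalyticOnNhd ℂ (Ψ ρ) Ω)
    (hΨeq : ∀ ρ ∈ Set.Ioc (0:ℝ) 1, ∀ z ∈ Ω \ SLat S,
      Ψ ρ z = (∑' p : ℤ × ℤ,
          (Complex.ofReal ((2:ℝ) ^ (-(ρ * ‖latPt p‖)))) * ϕ (z - latPt p)) /
        (∑' p : ℤ × ℤ, ϕ (z - latPt p)))
    :
    (∃ C > (0:ℝ), ∀ ρ ∈ Set.Ioc (0:ℝ) 1, ∀ z ∈ Ω, ‖Ψ ρ z‖ ≤ C) ∧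
    (∀ M : ℝ, 1 ≤ M → ∀ ε > (0:ℝ), ∃ ρ₀ > (0:ℝ),
      ∀ ρ ∈ Set.Ioo (0:ℝ) ρ₀, ∀ z ∈ Ω,
        |z.re| ≤ M → |z.im| ≤ M → ‖Ψ ρ z - 1‖ ≤ ε) := by
  classical
  obtain ⟨c, hc, hlb'⟩ := hlb
  have hb0 : (0:ℝ) ≤ b := by linarith
  -- construct δ
  have hfm : ∀ s ∈ S, 0 < min (min s.re (1 - s.re)) (min s.im (1 - s.im)) := by
    intro s hs
    have h := hSQ (Finset.mem_coe.mpr hs)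
    obtain ⟨⟨h1, h2⟩, h3, h4⟩ := h
    simp only [lt_min_iff]
    exact ⟨⟨h1, by linarith⟩, h3, by linarith⟩
  set fm : ℂ → ℝ := fun s => min (min s.re (1 - s.re)) (min s.im (1 - s.im)) with hfmdef
  set T : Finset ℝ := insert (1:ℝ) (S.image fm) with hT
  have hTne : T.Nonempty := ⟨1, Finset.mem_insert_self _ _⟩
  set δ : ℝ := T.min' hTne with hδdef
  have hδpos : 0 < δ := by
    rw [hδdef, Finset.lt_min'_iff]
    intro y hy
    rw [hT, Finset.mem_insert] at hy
    rcases hy with rfl | hy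
    · norm_num
    · obtain ⟨s, hs, rfl⟩ := Finset.mem_image.mp hy
      exact hfm s hs
  have hSδ : ∀ s ∈ S, δ ≤ s.re ∧ s.re + δ ≤ 1 ∧ δ ≤ s.im ∧ s.im + δ ≤ 1 := by
    intro s hs
    have hmem : fm s ∈ T := Finset.mem_insert_of_mem (Finset.mem_image_of_mem fm hs)
    have h := Finset.min'_le T _ hmem
    rw [← hδdef] at h
    rw [hfmdef] at h
    simp only [le_min_iff] at h
    exact ⟨h.1.1, by linarith [h.1.2], h.2.1, by linarith [h.2.2]⟩
  -- construct K₂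
  have hclosedS : IsClosed {w : ℂ | ∀ s ∈ S, δ ≤ ‖w - s‖} := by
    have hrepr : {w : ℂ | ∀ s ∈ S, δ ≤ ‖w - s‖}
        = ⋂ s ∈ S, {w : ℂ | δ ≤ ‖w - s‖} := by
      ext w; simp
    rw [hrepr]
    exact isClosed_biInter fun s _ =>
      isClosed_le continuous_const (continuous_norm.comp (continuous_sub_right s))
  set A : Set ℂ := Metric.closedBall (0:ℂ) 5 ∩ {w : ℂ | ∀ s ∈ S, δ ≤ ‖w - s‖}
    with hAdef
  have hAcomp : IsCompact A := (isCompact_closedBall _ _).inter_right hclosedS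
  have hAcont : ContinuousOn ϕ A := by
    intro x hx
    have hxS : x ∈ ((S : Set ℂ))ᶜ := by
      intro hxS
      have h := hx.2 x hxS
      simp only [sub_self, norm_zero] at h
      linarith
    exact (hana x hxS).continuousAt.continuousWithinAt
  obtain ⟨K₂', hK₂'⟩ := hAcomp.exists_bound_of_continuousOn hAcont
  set K₂ : ℝ := max K₂' 0 with hK₂def
  have hK₂0 : 0 ≤ K₂ := le_max_right _ _
  have hK₂ : ∀ w : ℂ, ‖w‖ ≤ 5 → (∀ s ∈ S, δ ≤ ‖w - s‖) →
      ‖ϕ w‖ ≤ K₂ := by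
    intro w h1 h2
    have hwA : w ∈ A := ⟨by simpa [Metric.mem_closedBall, Complex.dist_eq] using h1, h2⟩
    calc ‖ϕ w‖ = ‖ϕ w‖ := rfl
      _ ≤ K₂' := hK₂' w hwA
      _ ≤ K₂ := le_max_left _ _
  -- the dominating function and its sum
  set g : ℤ × ℤ → ℝ := gfun b d K₂ with hgdef
  have hgsum : Summable g := gfun_summable hb hd hK₂0
  have hgnn : ∀ q, 0 ≤ g q := fun q => gfun_nonneg hd hK₂0 q
  set K : ℝ := ∑' q, g q with hKdef
  have hK0 : 0 ≤ K := tsum_nonneg hgnn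
  have key : ∀ z ∈ Ω, ∀ m : ℤ × ℤ, m ≠ (⌊z.re⌋, ⌊z.im⌋) →
      ‖ϕ (z - latPt m)‖ ≤ g (m - (⌊z.re⌋, ⌊z.im⌋)) :=
    fun z hz m hm => key_bound Ω hper S ϕ b d δ K₂ hb hd hδpos hSδ hK₂ hdecay z hz m hm
  -- countability and density
  have hcount : (SLat S).Countable := by
    have hrep : SLat S = ⋃ s ∈ (S : Set ℂ), Set.range (fun p : ℤ × ℤ => s + latPt p) := by
      ext w; simp [SLat, eq_comm]
    rw [hrep]
    exact (S : Set ℂ).to_countable.biUnion fun s _ => Set.countable_range _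
  have hNeBot : ∀ z₀ ∈ Ω, (𝓝[Ω \ SLat S] z₀).NeBot := by
    intro z₀ hz₀
    rw [← mem_closure_iff_nhdsWithin_neBot, mem_closure_iff]
    intro O hO hzO
    obtain ⟨r, hr, hball⟩ := Metric.isOpen_iff.mp (hO.inter hΩopen) z₀ ⟨hzO, hz₀⟩
    by_contra hemp
    have hsub : Metric.ball z₀ r ⊆ SLat S := by
      intro x hx
      have hxO := hball hx
      by_contra hxS
      exact hemp ⟨x, hxO.1, hxO.2, hxS⟩
    have h1 : volume (Metric.ball z₀ r) = 0 :=
      measure_mono_null hsub (hcount.measure_zero volume)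
    have h2 : 0 < volume (Metric.ball z₀ r) := Metric.measure_ball_pos _ _ hr
    rw [h1] at h2
    exact lt_irrefl _ h2
  have extend : ∀ (f : ℂ → ℂ) (z₀ : ℂ), z₀ ∈ Ω → ContinuousAt f z₀ → ∀ C' : ℝ,
      (∀ᶠ zz in 𝓝[Ω \ SLat S] z₀, ‖f zz‖ ≤ C') → ‖f z₀‖ ≤ C' := by
    intro f z₀ hz₀ hf C' hC'
    have := hNeBot z₀ hz₀
    have htend : Tendsto (fun zz => ‖f zz‖) (𝓝[Ω \ SLat S] z₀)
        (𝓝 (‖f z₀‖)) :=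
      (continuous_norm.continuousAt.comp hf).continuousWithinAt
    exact le_of_tendsto htend hC'
  constructor
  · -- part (a)
    have hCpos : 0 < 1 + 2 * K / c := by
      have h1 : 0 ≤ 2 * K / c := div_nonneg (by linarith) hc.le
      linarith
    refine ⟨1 + 2 * K / c, hCpos, ?_⟩
    intro ρ hρ z₀ hz₀
    apply extend (Ψ ρ) z₀ hz₀ ((hΨana ρ hρ z₀ hz₀).continuousAt) _
    filter_upwards [eventually_mem_nhdsWithin] with z hzmem
    obtain ⟨hzΩ, hzS⟩ := hzmem
    rw [hΨeq ρ hρ z ⟨hzΩ, hzS⟩]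
    exact corA ϕ g K c ρ z hρ.1 hc hgsum hgnn hKdef (fun m hm => key z hzΩ m hm)
      (hsum z ⟨hzΩ, hzS⟩) (hlb' z ⟨hzΩ, hzS⟩)
  · -- part (b)
    intro M hM ε hε
    set L : ℝ := 2 * M + 6 with hL
    have hL0 : 0 < L := by rw [hL]; linarith
    set ε₁ : ℝ := c * ε / 4 with hε₁
    have hε₁pos : 0 < ε₁ := by
      rw [hε₁]
      exact div_pos (mul_pos hc hε) (by norm_num)
    obtain ⟨F, hF⟩ : ∃ F : Finset (ℤ × ℤ), K - ε₁ < ∑ q ∈ F, g q :=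
      (hgsum.hasSum.eventually (eventually_gt_nhds (show K - ε₁ < K by linarith))).exists
    set B : ℝ := ∑ q ∈ F, (L + ‖latPt q‖) * g q with hB
    have hB0 : 0 ≤ B :=
      Finset.sum_nonneg fun q _ =>
        mul_nonneg (add_nonneg hL0.le (norm_nonneg _)) (hgnn q)
    set Dc : ℝ := L + (L * K + B) / c with hDc
    have hDc0 : 0 ≤ Dc := by
      rw [hDc]
      have h1 : 0 ≤ L * K + B := add_nonneg (mul_nonneg hL0.le hK0) hB0
      have h2 : 0 ≤ (L * K + B) / c := div_nonneg h1 hc.le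
      linarith
    refine ⟨min 1 ((ε / 2) / (Dc + 1)),
      lt_min one_pos (div_pos (half_pos hε) (by linarith)), ?_⟩
    intro ρ hρ z₀ hz₀ hre him
    have hρ1 : ρ ∈ Set.Ioc (0:ℝ) 1 := ⟨hρ.1, le_of_lt (lt_of_lt_of_le hρ.2 (min_le_left _ _))⟩
    have hρD : ρ * Dc ≤ ε / 2 := by
      have h1 : ρ ≤ (ε / 2) / (Dc + 1) := le_of_lt (lt_of_lt_of_le hρ.2 (min_le_right _ _))
      have h2 : ρ * (Dc + 1) ≤ ε / 2 := by
        rw [← le_div_iff₀ (by linarith : (0:ℝ) < Dc + 1)]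
        exact h1
      nlinarith [hρ.1.le]
    have core : ∀ z ∈ Ω \ SLat S, |z.re| ≤ M + 1 → |z.im| ≤ M + 1 →
        ‖Ψ ρ z - 1‖ ≤ ε / 2 + ε / 4 := by
      intro z hzmem hre' him'
      obtain ⟨hzΩ, hzS⟩ := hzmem
      have hfl : ∀ x : ℝ, |((⌊x⌋ : ℤ) : ℝ)| ≤ |x| + 1 := by
        intro x
        rw [abs_le]
        constructor
        · have h1 := Int.lt_floor_add_one x
          have h2 := neg_abs_le x
          linarith
        · have h1 := Int.floor_le x
          have h2 := le_abs_self x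
          linarith
      have hnlat : ‖latPt ((⌊z.re⌋, ⌊z.im⌋) : ℤ × ℤ)‖ ≤ L := by
        have h1 := abs_latPt_le ((⌊z.re⌋, ⌊z.im⌋) : ℤ × ℤ)
        have h2 := hfl z.re
        have h3 := hfl z.im
        rw [hL]
        simp only at h1
        linarith
      have hbound := corB ϕ g K c ρ L ε₁ B F z hρ.1 hc hL0 hε₁pos hgsum hgnn hKdef
        (fun m hm => key z hzΩ m hm) (hsum z ⟨hzΩ, hzS⟩) (hlb' z ⟨hzΩ, hzS⟩) hF hB hnlat
      rw [hΨeq ρ hρ1 z ⟨hzΩ, hzS⟩]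
      refine hbound.trans ?_
      have h5 : (ρ * L * K + ρ * B + ε₁) / c = ρ * ((L * K + B) / c) + ε / 4 := by
        rw [hε₁]
        field_simp
      have h7 : ρ * L + (ρ * L * K + ρ * B + ε₁) / c = ρ * Dc + ε / 4 := by
        rw [h5, hDc]
        ring
      rw [h7]
      linarith
    have hcont : ContinuousAt (fun z => Ψ ρ z - 1) z₀ :=
      ((hΨana ρ hρ1 z₀ hz₀).continuousAt).sub continuousAt_const
    have hev : ∀ᶠ zz in 𝓝[Ω \ SLat S] z₀, ‖Ψ ρ zz - 1‖ ≤ ε / 2 + ε / 4 := by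
      have hop : IsOpen {zz : ℂ | |zz.re| < M + 1 ∧ |zz.im| < M + 1} := by
        have hrepr : {zz : ℂ | |zz.re| < M + 1 ∧ |zz.im| < M + 1}
            = (fun zz : ℂ => |zz.re|) ⁻¹' (Set.Iio (M + 1))
              ∩ (fun zz : ℂ => |zz.im|) ⁻¹' (Set.Iio (M + 1)) := rfl
        rw [hrepr]
        exact ((isOpen_Iio.preimage (_root_.continuous_abs.comp Complex.continuous_re)).inter
          (isOpen_Iio.preimage (_root_.continuous_abs.comp Complex.continuous_im)))
      have hz₀mem : z₀ ∈ {zz : ℂ | |zz.re| < M + 1 ∧ |zz.im| < M + 1} :=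
        ⟨by linarith, by linarith⟩
      have h1 : {zz : ℂ | |zz.re| < M + 1 ∧ |zz.im| < M + 1} ∈ 𝓝[Ω \ SLat S] z₀ :=
        nhdsWithin_le_nhds (hop.mem_nhds hz₀mem)
      filter_upwards [h1, eventually_mem_nhdsWithin] with zz hzz1 hzz2
      exact core zz hzz2 hzz1.1.le hzz1.2.le
    have hfin := extend (fun z => Ψ ρ z - 1) z₀ hz₀ hcont (ε / 2 + ε / 4) hev
    calc ‖Ψ ρ z₀ - 1‖ ≤ ε / 2 + ε / 4 := hfin
      _ ≤ ε := by linarith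
end
end

section
/- Suppose that for each ρ ∈ (0,1], Ψ_ρ : Ω → ℂ is analytic on Ω and satisfies Ψ_ρ(z) = φ^{(ρ)}(z)/φ(z) for all z ∈ Ω ∖ (S + Λ), where φ^{(ρ)}(z) = ∑_{m∈Λ} 2^{−ρ|m|} ϕ(z − m). Then for every compact set K ⊂ ℂ there exists a constant C_K > 0 such that |Ψ_ρ(z + m)| ≤ C_K ρ^{−b} (1 + |m|)^{−b} for every ρ ∈ (0,1], every m ∈ Λ, and every z ∈ K ∩ Ω. -/
open Complex MeasureTheory Set Filter Topology

noncomputable section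

lemma abs_p1_le (p : ℤ × ℤ) : |(p.1 : ℝ)| ≤ ‖latPt p‖ := by
  simpa [latPt] using Complex.abs_re_le_norm (latPt p)

lemma abs_p2_le (p : ℤ × ℤ) : |(p.2 : ℝ)| ≤ ‖latPt p‖ := by
  simpa [latPt] using Complex.abs_im_le_norm (latPt p)

lemma abs_of_mem_QSet {z : ℂ} (hz : z ∈ QSet) : ‖z‖ ≤ 2 := by
  obtain ⟨⟨h1, h2⟩, ⟨h3, h4⟩⟩ := hz
  calc ‖z‖ ≤ |z.re| + |z.im| := Complex.norm_le_abs_re_add_abs_im z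
    _ ≤ 2 := by rw [abs_of_pos h1, abs_of_pos h3]; linarith

lemma summable_int_aux {β : ℝ} (hβ : 1 < β) :
    Summable (fun n : ℤ => (1 + |(n:ℝ)|) ^ (-β)) := by
  have h := (Real.summable_one_div_int_add_rpow (1/2) β).mpr hβ
  refine h.of_nonneg_of_le (fun n => by positivity) (fun n => ?_)
  rw [Real.rpow_neg (by positivity), ← one_div]
  have h1 : (0:ℝ) < |(n:ℝ) + 1/2| := by
    rcases le_or_gt 0 (n:ℝ) with h | h
    · rw [abs_of_pos (by linarith)]; linarith
    · have hn : n < 0 := by exact_mod_cast h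
      have : (n:ℝ) ≤ -1 := by exact_mod_cast (by omega : n ≤ -1)
      rw [abs_of_neg (by linarith)]; linarith
  have h2 : |(n:ℝ) + 1/2| ≤ 1 + |(n:ℝ)| := by
    calc |(n:ℝ) + 1/2| ≤ |(n:ℝ)| + |(1:ℝ)/2| := abs_add_le _ _
    _ ≤ 1 + |(n:ℝ)| := by
        have : |(1:ℝ)/2| = 1/2 := by norm_num
        linarith
  gcongr

lemma summable_lattice {b : ℝ} (hb : 2 < b) :
    Summable (fun p : ℤ × ℤ => (1 + ‖latPt p‖) ^ (-b)) := by
  have hβ : 1 < b/2 := by linarith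
  have hs := summable_int_aux hβ
  have hprod := hs.mul_of_nonneg hs (fun n => by positivity) (fun n => by positivity)
  refine hprod.of_nonneg_of_le (fun p => by positivity) (fun p => ?_)
  have h1 : (0:ℝ) ≤ 1 + ‖latPt p‖ := by positivity
  have key : (1 + |(p.1:ℝ)|) * (1 + |(p.2:ℝ)|) ≤ (1 + ‖latPt p‖) ^ (2:ℝ) := by
    rw [Real.rpow_two]
    have := abs_p1_le p; have := abs_p2_le p
    nlinarith [abs_nonneg ((p.1:ℝ)), abs_nonneg ((p.2:ℝ))]
  calc (1 + ‖latPt p‖) ^ (-b)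
      = ((1 + ‖latPt p‖) ^ (2:ℝ)) ^ (-(b/2)) := by
        rw [← Real.rpow_mul h1]; ring_nf
    _ ≤ ((1 + |(p.1:ℝ)|) * (1 + |(p.2:ℝ)|)) ^ (-(b/2)) := by
        apply Real.rpow_le_rpow_of_nonpos (by positivity) key (by linarith)
    _ = (1 + |(p.1:ℝ)|) ^ (-(b/2)) * (1 + |(p.2:ℝ)|) ^ (-(b/2)) := by
        rw [Real.mul_rpow (by positivity) (by positivity)]

-- key2
lemma key2 {ρ t b : ℝ} (hρ0 : 0 < ρ) (hρ1 : ρ ≤ 1) (ht : 0 ≤ t) (hb : 0 ≤ b) :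
    (1 + ρ * t) ^ (-b) ≤ ρ ^ (-b) * (1 + t) ^ (-b) := by
  have h1 : ρ * (1 + t) ≤ 1 + ρ * t := by nlinarith
  calc (1 + ρ * t) ^ (-b) ≤ (ρ * (1 + t)) ^ (-b) :=
        Real.rpow_le_rpow_of_nonpos (by positivity) h1 (by linarith)
    _ = ρ ^ (-b) * (1 + t) ^ (-b) := Real.mul_rpow hρ0.le (by positivity)

-- key1
lemma key1 {b : ℝ} (hb : 0 < b) :
    ∃ Cb ≥ (1:ℝ), ∀ x : ℝ, 0 ≤ x → (2:ℝ) ^ (-x) ≤ Cb * (1 + x) ^ (-b) := by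
  set s : ℝ := Real.log 2 / (2 * b) with hs
  have hlog : 0 < Real.log 2 := Real.log_pos (by norm_num)
  have hs0 : 0 < s := by positivity
  refine ⟨(1 + 1/s) ^ b, Real.one_le_rpow (by nlinarith [one_div_pos.mpr hs0]) hb.le, fun x hx => ?_⟩
  have hmain : (1 + x) ^ b ≤ (1 + 1/s) ^ b * (2:ℝ) ^ x := by
    have h1 : 1 + x ≤ (1 + 1/s) * Real.exp (s * x) := by
      have he1 : (1:ℝ) ≤ Real.exp (s * x) := Real.one_le_exp (by positivity)
      have he2 : s * x ≤ Real.exp (s * x) := by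
        have := Real.add_one_le_exp (s * x); linarith
      have hx' : x ≤ Real.exp (s * x) / s := by
        rw [le_div_iff₀ hs0]; linarith [he2]
      calc 1 + x ≤ Real.exp (s*x) + Real.exp (s*x)/s := by linarith
        _ = (1 + 1/s) * Real.exp (s * x) := by field_simp
    have h2 : (1 + x) ^ b ≤ ((1 + 1/s) * Real.exp (s * x)) ^ b :=
      Real.rpow_le_rpow (by positivity) h1 hb.le
    have h3 : ((1 + 1/s) * Real.exp (s * x)) ^ b
        = (1 + 1/s) ^ b * Real.exp (s * x * b) := by
      rw [Real.mul_rpow (by positivity) (Real.exp_nonneg _), ← Real.exp_mul]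
    have h4 : Real.exp (s * x * b) ≤ (2:ℝ) ^ x := by
      have : s * x * b = x * Real.log 2 / 2 := by rw [hs]; field_simp
      rw [this, Real.rpow_def_of_pos (by norm_num : (0:ℝ) < 2)]
      apply Real.exp_le_exp.mpr
      nlinarith
    calc (1 + x) ^ b ≤ (1 + 1/s) ^ b * Real.exp (s * x * b) := h2.trans_eq h3
      _ ≤ (1 + 1/s) ^ b * (2:ℝ) ^ x := by
          have : (0:ℝ) ≤ (1 + 1/s) ^ b := by positivity
          nlinarith
  -- convert
  have h2x : (0:ℝ) < (2:ℝ) ^ x := Real.rpow_pos_of_pos (by norm_num) _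
  have h1x : (0:ℝ) < (1 + x) ^ b := Real.rpow_pos_of_pos (by positivity) _
  rw [Real.rpow_neg (by norm_num : (0:ℝ) ≤ 2), Real.rpow_neg (by positivity)]
  rw [inv_le_iff_one_le_mul₀ h2x]
  calc (1:ℝ) = (1+x)^b / (1+x)^b := (div_self h1x.ne').symm
    _ ≤ ((1 + 1/s) ^ b * (2:ℝ)^x) / (1+x)^b := by gcongr
    _ = (1 + 1/s) ^ b * ((1+x)^b)⁻¹ * (2:ℝ)^x := by field_simp

lemma hhalf {b : ℝ} (hb : 0 ≤ b) : ∀ x y : ℝ, 0 < x → x / 2 ≤ y →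
    y ^ (-b) ≤ (2:ℝ)^b * x ^ (-b) := by
  intro x y hx hxy
  calc y^(-b) ≤ (x/2)^(-b) :=
        Real.rpow_le_rpow_of_nonpos (by positivity) hxy (by linarith)
    _ = x^(-b) / 2^(-b) := Real.div_rpow hx.le (by norm_num) _
    _ = (2:ℝ)^b * x^(-b) := by
        rw [Real.rpow_neg (by norm_num : (0:ℝ) ≤ 2), div_eq_mul_inv, inv_inv]; ring

lemma usum {b Cb : ℝ} (hb : 2 < b) (hCb : 1 ≤ Cb)
    (hkey : ∀ x : ℝ, 0 ≤ x → (2:ℝ)^(-x) ≤ Cb * (1+x)^(-b))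
    {ρ : ℝ} (hρ0 : 0 < ρ) (hρ1 : ρ ≤ 1) (m : ℤ × ℤ) :
    Summable (fun q : ℤ×ℤ => (2:ℝ) ^ (-(ρ * ‖latPt (q + m)‖))) ∧
    (∑' q : ℤ×ℤ, (2:ℝ) ^ (-(ρ * ‖latPt (q + m)‖)))
      ≤ Cb * ρ^(-b) * ∑' p : ℤ×ℤ, (1 + ‖latPt p‖) ^ (-b) := by
  have hvsum := summable_lattice hb
  have hvm : Summable (fun q : ℤ×ℤ => (1 + ‖latPt (q + m)‖) ^ (-b)) :=
by
    have := ((Equiv.addRight m).summable_iff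
      (f := fun p : ℤ×ℤ => (1 + ‖latPt p‖) ^ (-b))).2 hvsum
    exact this
  have hterm : ∀ q : ℤ×ℤ, (2:ℝ) ^ (-(ρ * ‖latPt (q + m)‖))
      ≤ Cb * ρ^(-b) * (1 + ‖latPt (q + m)‖) ^ (-b) := by
    intro q
    have h1 := hkey (ρ * ‖latPt (q + m)‖) (by positivity)
    have h2 := key2 (t := ‖latPt (q + m)‖) hρ0 hρ1 (by positivity)
      (by linarith : (0:ℝ) ≤ b)
    calc (2:ℝ) ^ (-(ρ * ‖latPt (q + m)‖))
        ≤ Cb * (1 + ρ * ‖latPt (q + m)‖) ^ (-b) := h1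
      _ ≤ Cb * (ρ^(-b) * (1 + ‖latPt (q + m)‖) ^ (-b)) := by
          have : (0:ℝ) < Cb := by linarith
          exact mul_le_mul_of_nonneg_left h2 this.le
      _ = Cb * ρ^(-b) * (1 + ‖latPt (q + m)‖) ^ (-b) := by ring
  have hus : Summable (fun q : ℤ×ℤ => (2:ℝ) ^ (-(ρ * ‖latPt (q + m)‖))) :=
    Summable.of_nonneg_of_le (fun q => by positivity) hterm ((hvm.mul_left _))
  refine ⟨hus, ?_⟩
  calc (∑' q : ℤ×ℤ, (2:ℝ) ^ (-(ρ * ‖latPt (q + m)‖)))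
      ≤ ∑' q : ℤ×ℤ, Cb * ρ^(-b) * (1 + ‖latPt (q + m)‖) ^ (-b) :=
        Summable.tsum_le_tsum hterm hus (hvm.mul_left _)
    _ = Cb * ρ^(-b) * ∑' q : ℤ×ℤ, (1 + ‖latPt (q + m)‖) ^ (-b) := tsum_mul_left
    _ = Cb * ρ^(-b) * ∑' p : ℤ×ℤ, (1 + ‖latPt p‖) ^ (-b) := by
        congr 1
        have := (Equiv.addRight m).tsum_eq
          (fun p : ℤ×ℤ => (1 + ‖latPt p‖) ^ (-b))
        simpa [Function.comp] using this

lemma master {b Cb : ℝ} (hb : 2 < b) (hCb : 1 ≤ Cb)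
    (hkey : ∀ x : ℝ, 0 ≤ x → (2:ℝ)^(-x) ≤ Cb * (1+x)^(-b))
    {ρ : ℝ} (hρ0 : 0 < ρ) (hρ1 : ρ ≤ 1) (m : ℤ × ℤ) :
    Summable (fun q : ℤ×ℤ => (2:ℝ) ^ (-(ρ * ‖latPt (q + m)‖)) *
      (1 + ‖latPt q‖) ^ (-b)) ∧
    (∑' q : ℤ×ℤ, (2:ℝ) ^ (-(ρ * ‖latPt (q + m)‖)) *
      (1 + ‖latPt q‖) ^ (-b))
      ≤ (2 * (2:ℝ)^b * Cb * (∑' p : ℤ×ℤ, (1 + ‖latPt p‖) ^ (-b)))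
        * ρ^(-b) * (1 + ‖latPt m‖) ^ (-b) := by
  have hb0 : (0:ℝ) ≤ b := by linarith
  have hvsum := summable_lattice hb
  set T := ∑' p : ℤ×ℤ, (1 + ‖latPt p‖) ^ (-b) with hT
  obtain ⟨hus, husle⟩ := usum hb hCb hkey hρ0 hρ1 m
  set M := ‖latPt m‖ with hM
  have hM0 : 0 ≤ M := norm_nonneg _
  set u := fun q : ℤ×ℤ => (2:ℝ) ^ (-(ρ * ‖latPt (q + m)‖)) with hu
  set v := fun q : ℤ×ℤ => (1 + ‖latPt q‖) ^ (-b) with hv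
  have hu0 : ∀ q, 0 ≤ u q := fun q => by simp only [hu]; positivity
  have hv0 : ∀ q, 0 ≤ v q := fun q => by simp only [hv]; positivity
  have hu1 : ∀ q, u q ≤ 1 := fun q => by
    simp only [hu]
    calc (2:ℝ) ^ (-(ρ * ‖latPt (q + m)‖)) ≤ (2:ℝ) ^ (0:ℝ) := by
          apply Real.rpow_le_rpow_of_exponent_le one_le_two
          have : 0 ≤ ρ * ‖latPt (q + m)‖ := by positivity
          linarith
      _ = 1 := Real.rpow_zero 2
  set B1 := fun q : ℤ×ℤ => (2:ℝ)^b * (1 + M)^(-b) * u q with hB1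
  set B2 := fun q : ℤ×ℤ => (2:ℝ)^b * Cb * ρ^(-b) * (1 + M)^(-b) * v q with hB2
  have habs : ∀ q : ℤ×ℤ, M - ‖latPt q‖ ≤ ‖latPt (q + m)‖ := by
    intro q
    rw [latPt_add]
    have h2 := norm_sub_le (latPt q + latPt m) (latPt q)
    simp only [add_sub_cancel_left] at h2
    rw [hM]
    linarith
  have hcase : ∀ q : ℤ×ℤ, u q * v q ≤ B1 q + B2 q := by
    intro q
    by_cases hq : M ≤ 2 * ‖latPt q‖
    · have hvq : v q ≤ (2:ℝ)^b * (1 + M)^(-b) := by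
        simp only [hv]
        apply hhalf hb0 (1 + M) _ (by linarith)
        have := norm_nonneg (latPt q); linarith
      have : u q * v q ≤ B1 q := by
        simp only [hB1]
        calc u q * v q ≤ u q * ((2:ℝ)^b * (1 + M)^(-b)) :=
              mul_le_mul_of_nonneg_left hvq (hu0 q)
          _ = (2:ℝ)^b * (1 + M)^(-b) * u q := by ring
      have h2 : 0 ≤ B2 q := by
        simp only [hB2]
        have := hv0 q
        positivity
      linarith
    · push_neg at hq
      have h1 : M / 2 ≤ ‖latPt (q + m)‖ := by
        have := habs q; linarith
      have huq : u q ≤ (2:ℝ)^b * Cb * ρ^(-b) * (1 + M)^(-b) := by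
        simp only [hu]
        calc (2:ℝ) ^ (-(ρ * ‖latPt (q + m)‖)) ≤ (2:ℝ) ^ (-(ρ * (M/2))) := by
              apply Real.rpow_le_rpow_of_exponent_le one_le_two
              have : ρ * (M/2) ≤ ρ * ‖latPt (q + m)‖ :=
                mul_le_mul_of_nonneg_left h1 hρ0.le
              linarith
          _ ≤ Cb * (1 + ρ * (M/2))^(-b) := hkey _ (by positivity)
          _ ≤ Cb * ((2:ℝ)^b * (1 + ρ * M)^(-b)) := by
              apply mul_le_mul_of_nonneg_left _ (by linarith : (0:ℝ) ≤ Cb)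
              apply hhalf hb0 (1 + ρ * M) _ (by nlinarith)
              nlinarith
          _ ≤ Cb * ((2:ℝ)^b * (ρ^(-b) * (1 + M)^(-b))) := by
              apply mul_le_mul_of_nonneg_left _ (by linarith : (0:ℝ) ≤ Cb)
              apply mul_le_mul_of_nonneg_left (key2 hρ0 hρ1 hM0 hb0) (by positivity)
          _ = (2:ℝ)^b * Cb * ρ^(-b) * (1 + M)^(-b) := by ring
      calc u q * v q ≤ ((2:ℝ)^b * Cb * ρ^(-b) * (1 + M)^(-b)) * v q :=
            mul_le_mul_of_nonneg_right huq (hv0 q)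
        _ = B2 q := by simp only [hB2]
        _ ≤ B1 q + B2 q := by
            have : 0 ≤ B1 q := by simp only [hB1]; have := hu0 q; positivity
            linarith
  have hB1sum : Summable B1 := hus.mul_left _
  have hB2sum : Summable B2 := hvsum.mul_left _
  have hBsum : Summable (fun q => B1 q + B2 q) := hB1sum.add hB2sum
  have htsum : Summable (fun q : ℤ×ℤ => u q * v q) :=
    Summable.of_nonneg_of_le (fun q => mul_nonneg (hu0 q) (hv0 q)) hcase hBsum
  refine ⟨htsum, ?_⟩
  calc (∑' q, u q * v q) ≤ ∑' q, (B1 q + B2 q) := Summable.tsum_le_tsum hcase htsum hBsum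
    _ = (∑' q, B1 q) + ∑' q, B2 q := Summable.tsum_add hB1sum hB2sum
    _ = (2:ℝ)^b * (1 + M)^(-b) * (∑' q, u q) + (2:ℝ)^b * Cb * ρ^(-b) * (1 + M)^(-b) * T := by
        rw [tsum_mul_left, tsum_mul_left]
    _ ≤ (2:ℝ)^b * (1 + M)^(-b) * (Cb * ρ^(-b) * T) + (2:ℝ)^b * Cb * ρ^(-b) * (1 + M)^(-b) * T := by
        have h1 : (0:ℝ) ≤ (2:ℝ)^b * (1 + M)^(-b) := by positivity
        have := mul_le_mul_of_nonneg_left husle h1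
        linarith
    _ = (2 * (2:ℝ)^b * Cb * T) * ρ^(-b) * (1 + M)^(-b) := by ring

lemma finsep (A : Finset ℂ) : ∃ δ > (0:ℝ), ∀ a ∈ A, ∀ b ∈ A, a ≠ b → δ ≤ dist a b := by
  classical
  set P := (A ×ˢ A).filter (fun ab => ab.1 ≠ ab.2) with hP
  rcases P.eq_empty_or_nonempty with h | h
  · refine ⟨1, one_pos, fun a ha b hb hab => absurd ?_ (Finset.notMem_empty (a,b))⟩
    rw [← h, hP, Finset.mem_filter]
    exact ⟨Finset.mem_product.mpr ⟨ha, hb⟩, hab⟩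
  · refine ⟨P.inf' h (fun ab => dist ab.1 ab.2), ?_, fun a ha b hb hab => ?_⟩
    · rw [gt_iff_lt, Finset.lt_inf'_iff]
      intro ab hab
      rw [hP, Finset.mem_filter] at hab
      exact dist_pos.mpr hab.2
    · have hmem : (a, b) ∈ P := by
        rw [hP, Finset.mem_filter]
        exact ⟨Finset.mem_product.mpr ⟨ha, hb⟩, hab⟩
      exact Finset.inf'_le (fun ab => dist ab.1 ab.2) hmem

lemma slat_countable (S : Finset ℂ) : (SLat S).Countable := by
  have : SLat S = Set.range (fun x : S × (ℤ × ℤ) => (x.1 : ℂ) + latPt x.2) := by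
    ext z
    constructor
    · rintro ⟨s, hs, p, rfl⟩; exact ⟨⟨⟨s, hs⟩, p⟩, rfl⟩
    · rintro ⟨⟨⟨s, hs⟩, p⟩, rfl⟩; exact ⟨s, hs, p, rfl⟩
  rw [this]
  exact Set.countable_range _

lemma slat_dense_compl (S : Finset ℂ) : Dense (SLat S)ᶜ :=
  (slat_countable S).dense_compl ℂ

lemma abs_of_mem_closure_QSet {z : ℂ} (hz : z ∈ closure QSet) : ‖z‖ ≤ 2 := by
  have hsub : QSet ⊆ Metric.closedBall 0 2 := by
    intro w hw
    obtain ⟨⟨h1, h2⟩, ⟨h3, h4⟩⟩ := hw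
    simp only [Metric.mem_closedBall, dist_zero_right]
    calc ‖w‖ ≤ |w.re| + |w.im| := Complex.norm_le_abs_re_add_abs_im w
      _ ≤ 2 := by rw [abs_of_pos h1, abs_of_pos h3]; linarith
  have := closure_minimal hsub Metric.isClosed_closedBall
  have hz2 := this hz
  simpa using Metric.mem_closedBall.mp hz2

set_option maxHeartbeats 2000000 in
lemma Pbound
    (Ω : Set ℂ)
    (hper : ∀ z ∈ Ω, ∀ p : ℤ × ℤ, z + latPt p ∈ Ω)
    (S : Finset ℂ) (hSQ : (S : Set ℂ) ⊆ QSet)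
    (ϕ : ℂ → ℂ)
    (hana : AnalyticOnNhd ℂ ϕ ((S : Set ℂ)ᶜ))
    (b d : ℝ) (hb : 2 < b) (hd : 0 ≤ d)
    (hdecay : ∀ z ∈ Ω, z ∉ closure QSet →
      (1 + ‖z‖) ^ b * ‖ϕ z‖ ≤ d)
    (hsum : ∀ z ∈ Ω \ SLat S,
      Summable (fun p : ℤ × ℤ => ‖ϕ (z - latPt p)‖))
    (c : ℝ) (hc : 0 < c)
    (hlbc : ∀ z ∈ Ω \ SLat S, c ≤ ‖∑' p : ℤ × ℤ, ϕ (z - latPt p)‖)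
    (Ψ : ℝ → ℂ → ℂ)
    (hΨeq : ∀ ρ ∈ Set.Ioc (0:ℝ) 1, ∀ z ∈ Ω \ SLat S,
      Ψ ρ z = (∑' p : ℤ × ℤ,
          (Complex.ofReal ((2:ℝ) ^ (-(ρ * ‖latPt p‖)))) * ϕ (z - latPt p)) /
        (∑' p : ℤ × ℤ, ϕ (z - latPt p)))
    (R₁ : ℝ) (hR₁ : 1 ≤ R₁) :
    ∃ C > (0:ℝ), ∀ ρ ∈ Set.Ioc (0:ℝ) 1, ∀ m : ℤ × ℤ, ∀ z : ℂ,
      ‖z‖ ≤ R₁ → z ∈ Ω → z ∉ SLat S →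
      ‖Ψ ρ (z + latPt m)‖ ≤
        C * ρ ^ (-b) * (1 + ‖latPt m‖) ^ (-b) := by
  classical
  have hb0 : (0:ℝ) < b := by linarith
  obtain ⟨Cb, hCb, hkey⟩ := key1 hb0
  have hCb0 : (0:ℝ) < Cb := by linarith
  set T := ∑' p : ℤ×ℤ, (1 + ‖latPt p‖) ^ (-b) with hTdef
  have hTsum := summable_lattice hb
  have hT1 : (1:ℝ) ≤ T := by
    have h0 : (1 + ‖latPt ((0,0) : ℤ×ℤ)‖) ^ (-b) = 1 := by
      simp [latPt]
    calc (1:ℝ) = (1 + ‖latPt ((0,0) : ℤ×ℤ)‖) ^ (-b) := h0.symm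
      _ ≤ T := Summable.le_tsum hTsum _ (fun p _ => by positivity)
  have hT0 : (0:ℝ) < T := by linarith
  set R₂ : ℝ := R₁ + 4 with hR₂def
  have hR₂0 : (0:ℝ) < R₂ := by linarith
  set N : ℤ := ⌈R₂⌉ with hNdef
  set F : Finset (ℤ × ℤ) := Finset.Icc (-N) N ×ˢ Finset.Icc (-N) N with hFdef
  have hFmem : ∀ q : ℤ × ℤ, ‖latPt q‖ ≤ R₂ → q ∈ F := by
    intro q hq
    have h1 : |(q.1 : ℝ)| ≤ (N : ℝ) := (abs_p1_le q).trans (hq.trans (Int.le_ceil R₂))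
    have h2 : |(q.2 : ℝ)| ≤ (N : ℝ) := (abs_p2_le q).trans (hq.trans (Int.le_ceil R₂))
    have h1' : -N ≤ q.1 ∧ q.1 ≤ N := by
      rw [abs_le] at h1; exact ⟨by exact_mod_cast h1.1, by exact_mod_cast h1.2⟩
    have h2' : -N ≤ q.2 ∧ q.2 ≤ N := by
      rw [abs_le] at h2; exact ⟨by exact_mod_cast h2.1, by exact_mod_cast h2.2⟩
    simp only [hFdef, Finset.mem_product, Finset.mem_Icc]
    exact ⟨⟨h1'.1, h1'.2⟩, ⟨h2'.1, h2'.2⟩⟩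
  set A : Finset ℂ := Finset.image (fun x : ℂ × (ℤ × ℤ) => x.1 + latPt x.2) (S ×ˢ F)
    with hAdef
  obtain ⟨δA, hδA0, hδA⟩ := finsep A
  set δ : ℝ := min (δA/3) 1 with hδdef
  have hδ0 : 0 < δ := by
    apply lt_min (by linarith) one_pos
  have hδ1 : δ ≤ 1 := min_le_right _ _
  have hδ3 : 3 * δ ≤ δA := by
    have := min_le_left (δA/3) 1; linarith
  -- sup of |ϕ| on the compact set away from S
  set Kset : Set ℂ := Metric.closedBall (0:ℂ) (R₁ + R₂) ∩ {w | ∀ s ∈ S, δ ≤ dist w s}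
    with hKsetdef
  have hKsetcompact : IsCompact Kset := by
    apply (isCompact_closedBall (0:ℂ) (R₁ + R₂)).inter_right
    have : {w : ℂ | ∀ s ∈ S, δ ≤ dist w s} = ⋂ s ∈ S, {w : ℂ | δ ≤ dist w s} := by
      ext w; simp
    rw [this]
    exact isClosed_biInter (fun s _ => isClosed_le continuous_const
      (continuous_id.dist continuous_const))
  have hKsetS : Kset ⊆ ((S : Set ℂ)ᶜ) := by
    intro w hw hwS
    have := hw.2 w hwS
    simp at this
    linarith
  obtain ⟨M₁, hM₁⟩ := hKsetcompact.exists_bound_of_continuousOn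
    ((hana.continuousOn).mono hKsetS)
  set M₂ : ℝ := max (max ((max M₁ 0) * (1+R₂)^b) (d * (1+R₁)^b)) 1 with hM₂def
  have hM₂1 : (1:ℝ) ≤ M₂ := le_max_right _ _
  have hM₂0 : (0:ℝ) < M₂ := by linarith
  set C₃ : ℝ := 2 * (2:ℝ)^b * Cb * T with hC₃def
  have hC₃0 : (0:ℝ) < C₃ := by
    have : (0:ℝ) < (2:ℝ)^b := Real.rpow_pos_of_pos (by norm_num) _
    positivity
  set C : ℝ := (2:ℝ)^R₂ * Cb * (1 + M₂*T/c) + M₂*C₃/c with hCdef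
  have hC0 : (0:ℝ) < C := by
    have h2R : (0:ℝ) < (2:ℝ)^R₂ := Real.rpow_pos_of_pos (by norm_num) _
    have : (0:ℝ) < 1 + M₂*T/c := by positivity
    positivity
  refine ⟨C, hC0, ?_⟩
  rintro ρ ⟨hρ0, hρ1⟩ m z hzR hzΩ hzS
  have hSabs : ∀ s ∈ S, ‖s‖ ≤ 2 := fun s hs => abs_of_mem_QSet (hSQ hs)
  -- any singular index is in F
  have hqF : ∀ q : ℤ×ℤ, (∃ s ∈ S, dist (z - latPt q) s < δ) →
      ‖latPt q‖ ≤ R₂ := by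
    rintro q ⟨s, hs, hdist⟩
    have h2 : ‖z - latPt q - s‖ < δ := by rwa [Complex.dist_eq] at hdist
    have h4 : latPt q = z - ((z - latPt q - s) + s) := by ring
    rw [h4]
    have h5 := norm_sub_le z ((z - latPt q - s) + s)
    have h6 := norm_add_le (z - latPt q - s) s
    have h7 := hSabs s hs
    rw [hR₂def]
    linarith
  -- at most one singular index
  have hsing : ∀ q₁ q₂ : ℤ×ℤ, (∃ s ∈ S, dist (z - latPt q₁) s < δ) →
      (∃ s ∈ S, dist (z - latPt q₂) s < δ) → q₁ = q₂ := by
    intro q₁ q₂ h₁ h₂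
    by_contra hne
    have hq₁F : q₁ ∈ F := hFmem q₁ (hqF q₁ h₁)
    have hq₂F : q₂ ∈ F := hFmem q₂ (hqF q₂ h₂)
    obtain ⟨s₁, hs₁, hd₁⟩ := h₁
    obtain ⟨s₂, hs₂, hd₂⟩ := h₂
    have ha₁ : s₁ + latPt q₁ ∈ A := by
      rw [hAdef]
      exact Finset.mem_image.mpr ⟨(s₁,q₁), Finset.mem_product.mpr ⟨hs₁,hq₁F⟩, rfl⟩
    have ha₂ : s₂ + latPt q₂ ∈ A := by
      rw [hAdef]
      exact Finset.mem_image.mpr ⟨(s₂,q₂), Finset.mem_product.mpr ⟨hs₂,hq₂F⟩, rfl⟩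
    have hane : s₁ + latPt q₁ ≠ s₂ + latPt q₂ := by
      intro he
      apply hne
      have hres : s₁.re - s₂.re = ((q₂.1 - q₁.1 : ℤ) : ℝ) ∧
          s₁.im - s₂.im = ((q₂.2 - q₁.2 : ℤ) : ℝ) := by
        have hdiff : s₁ - s₂ = latPt q₂ - latPt q₁ := by
          rw [sub_eq_sub_iff_add_eq_add]; rw [he]; ring
        constructor
        · have := congrArg Complex.re hdiff
          simpa [latPt] using this
        · have := congrArg Complex.im hdiff
          simpa [latPt] using this
      have hs₁Q := hSQ hs₁
      have hs₂Q := hSQ hs₂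
      obtain ⟨⟨h1a, h1b⟩, ⟨h1c, h1d⟩⟩ := hs₁Q
      obtain ⟨⟨h2a, h2b⟩, ⟨h2c, h2d⟩⟩ := hs₂Q
      have he1 : q₂.1 - q₁.1 = 0 := by
        have : |((q₂.1 - q₁.1 : ℤ) : ℝ)| < 1 := by
          rw [← hres.1, abs_lt]; constructor <;> linarith
        by_contra h
        have : (1:ℝ) ≤ |((q₂.1 - q₁.1 : ℤ) : ℝ)| := by
          rw [← Int.cast_abs]
          exact_mod_cast Int.one_le_abs (by omega)
        linarith
      have he2 : q₂.2 - q₁.2 = 0 := by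
        have : |((q₂.2 - q₁.2 : ℤ) : ℝ)| < 1 := by
          rw [← hres.2, abs_lt]; constructor <;> linarith
        by_contra h
        have : (1:ℝ) ≤ |((q₂.2 - q₁.2 : ℤ) : ℝ)| := by
          rw [← Int.cast_abs]
          exact_mod_cast Int.one_le_abs (by omega)
        linarith
      have : q₁.1 = q₂.1 := by omega
      have : q₁.2 = q₂.2 := by omega
      exact Prod.ext (by omega) (by omega)
    have hda := hδA _ ha₁ _ ha₂ hane
    have ht1 : dist (s₁ + latPt q₁) z < δ := by
      rw [dist_comm, Complex.dist_eq]
      have : z - (s₁ + latPt q₁) = z - latPt q₁ - s₁ := by ring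
      rw [this, ← Complex.dist_eq]
      exact hd₁
    have ht2 : dist z (s₂ + latPt q₂) < δ := by
      rw [Complex.dist_eq]
      have : z - (s₂ + latPt q₂) = z - latPt q₂ - s₂ := by ring
      rw [this, ← Complex.dist_eq]
      exact hd₂
    have := dist_triangle (s₁ + latPt q₁) z (s₂ + latPt q₂)
    linarith
  -- bound on regular terms
  have hbound : ∀ q : ℤ×ℤ, (∀ s ∈ S, δ ≤ dist (z - latPt q) s) →
      ‖ϕ (z - latPt q)‖ ≤ M₂ * (1 + ‖latPt q‖) ^ (-b) := by
    intro q hreg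
    have hbase : (0:ℝ) < 1 + ‖latPt q‖ := by positivity
    have habs_zq : ‖latPt q‖ ≤ R₁ + ‖z - latPt q‖ := by
      have h4 : latPt q = z - (z - latPt q) := by ring
      calc ‖latPt q‖ = ‖z - (z - latPt q)‖ := by rw [← h4]
        _ ≤ ‖z‖ + ‖z - latPt q‖ := norm_sub_le _ _
        _ ≤ R₁ + ‖z - latPt q‖ := by linarith
    by_cases hqR : ‖latPt q‖ ≤ R₂
    · -- compact region
      have hw : z - latPt q ∈ Kset := by
        constructor
        · rw [Metric.mem_closedBall, dist_zero_right]
          calc ‖z - latPt q‖ ≤ ‖z‖ + ‖latPt q‖ :=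
                norm_sub_le _ _
            _ ≤ R₁ + R₂ := by linarith
        · exact hreg
      have h1 : ‖ϕ (z - latPt q)‖ ≤ max M₁ 0 := by
        have := hM₁ _ hw
        exact this.trans (le_max_left _ _)
      have h2 : (1 + R₂)^(-b) ≤ (1 + ‖latPt q‖)^(-b) :=
        Real.rpow_le_rpow_of_nonpos hbase (by linarith) (by linarith)
      have h3 : (1:ℝ) ≤ (1 + R₂)^b * (1 + ‖latPt q‖)^(-b) := by
        have hpos : (0:ℝ) < (1 + R₂)^b := Real.rpow_pos_of_pos (by linarith) _
        calc (1:ℝ) = (1 + R₂)^b * (1 + R₂)^(-b) := by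
              rw [← Real.rpow_add (by linarith : (0:ℝ) < 1 + R₂)]
              simp
          _ ≤ (1 + R₂)^b * (1 + ‖latPt q‖)^(-b) :=
              mul_le_mul_of_nonneg_left h2 hpos.le
      have hmax0 : (0:ℝ) ≤ max M₁ 0 := le_max_right _ _
      calc ‖ϕ (z - latPt q)‖ ≤ max M₁ 0 := h1
        _ = max M₁ 0 * 1 := (mul_one _).symm
        _ ≤ max M₁ 0 * ((1 + R₂)^b * (1 + ‖latPt q‖)^(-b)) :=
            mul_le_mul_of_nonneg_left h3 hmax0
        _ = (max M₁ 0 * (1 + R₂)^b) * (1 + ‖latPt q‖)^(-b) := by ring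
        _ ≤ M₂ * (1 + ‖latPt q‖)^(-b) := by
            apply mul_le_mul_of_nonneg_right _ (by positivity)
            rw [hM₂def]
            exact le_max_of_le_left (le_max_left _ _)
    · -- decay region
      push_neg at hqR
      have hwΩ : z - latPt q ∈ Ω := by
        have := hper z hzΩ (-q)
        rwa [latPt_neg, ← sub_eq_add_neg] at this
      have habs_w : R₂ - R₁ ≤ ‖z - latPt q‖ := by linarith
      have hwQ : z - latPt q ∉ closure QSet := by
        intro hcl
        have h2 := abs_of_mem_closure_QSet hcl
        rw [hR₂def] at habs_w
        linarith
      have hdec := hdecay _ hwΩ hwQ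
      have hw0 : (0:ℝ) < 1 + ‖z - latPt q‖ := by positivity
      have hpow : (0:ℝ) < (1 + ‖z - latPt q‖)^b := Real.rpow_pos_of_pos hw0 _
      have h5 : ‖ϕ (z - latPt q)‖ ≤ d * (1 + ‖z - latPt q‖)^(-b) := by
        rw [Real.rpow_neg hw0.le, ← div_eq_mul_inv]
        rw [le_div_iff₀ hpow]
        rw [mul_comm] at hdec
        exact hdec
      have hkey6 : 1 + ‖latPt q‖ ≤ (1+R₁) * (1 + ‖z - latPt q‖) := by
        nlinarith [norm_nonneg (z - latPt q)]
      have h7 : (1 + ‖z - latPt q‖)^(-b)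
          ≤ (1+R₁)^b * (1 + ‖latPt q‖)^(-b) := by
        have h8 : (1 + ‖latPt q‖)^(-b)
            ≥ ((1+R₁) * (1 + ‖z - latPt q‖))^(-b) :=
          Real.rpow_le_rpow_of_nonpos hbase hkey6 (by linarith)
        have h9 : ((1+R₁) * (1 + ‖z - latPt q‖))^(-b)
            = (1+R₁)^(-b) * (1 + ‖z - latPt q‖)^(-b) :=
          Real.mul_rpow (by linarith) hw0.le
        have hpos : (0:ℝ) < (1+R₁)^b := Real.rpow_pos_of_pos (by linarith) _
        have h10 := mul_le_mul_of_nonneg_left (h9 ▸ h8) hpos.le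
        calc (1 + ‖z - latPt q‖)^(-b)
            = (1+R₁)^b * ((1+R₁)^(-b) * (1 + ‖z - latPt q‖)^(-b)) := by
              rw [← mul_assoc, ← Real.rpow_add (by linarith : (0:ℝ) < 1+R₁)]
              simp
          _ ≤ (1+R₁)^b * (1 + ‖latPt q‖)^(-b) := h10
      calc ‖ϕ (z - latPt q)‖ ≤ d * (1 + ‖z - latPt q‖)^(-b) := h5
        _ ≤ d * ((1+R₁)^b * (1 + ‖latPt q‖)^(-b)) :=
            mul_le_mul_of_nonneg_left h7 hd
        _ = (d * (1+R₁)^b) * (1 + ‖latPt q‖)^(-b) := by ring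
        _ ≤ M₂ * (1 + ‖latPt q‖)^(-b) := by
            apply mul_le_mul_of_nonneg_right _ (by positivity)
            rw [hM₂def]
            exact le_max_of_le_left (le_max_right _ _)
  -- analytic core
  have hzΩS : z ∈ Ω \ SLat S := ⟨hzΩ, hzS⟩
  have hsz := hsum z hzΩS
  have hszC : Summable (fun p : ℤ×ℤ => ϕ (z - latPt p)) := by
    apply Summable.of_norm
    simpa using hsz
  set Dz := ∑' p : ℤ×ℤ, ϕ (z - latPt p) with hDzdef
  have hDc : c ≤ ‖Dz‖ := hlbc z hzΩS
  have habsDz0 : (0:ℝ) < ‖Dz‖ := lt_of_lt_of_le hc hDc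
  set w := z + latPt m with hwdef
  have hwΩ : w ∈ Ω := hper z hzΩ m
  have hwS : w ∉ SLat S := by
    rintro ⟨s, hs, p, hp⟩
    apply hzS
    refine ⟨s, hs, p - m, ?_⟩
    rw [latPt_sub]
    have : z = w - latPt m := by rw [hwdef]; ring
    rw [this, hp]; ring
  have hΨ := hΨeq ρ ⟨hρ0, hρ1⟩ w ⟨hwΩ, hwS⟩
  have hshift : ∀ q : ℤ×ℤ, w - latPt (q + m) = z - latPt q := by
    intro q; rw [latPt_add, hwdef]; ring
  have hDper : (∑' p : ℤ×ℤ, ϕ (w - latPt p)) = Dz := by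
    have h := (Equiv.addRight m).tsum_eq (fun p : ℤ×ℤ => ϕ (w - latPt p))
    rw [hDzdef, ← h]
    apply tsum_congr
    intro q
    simp only [Equiv.coe_addRight]
    rw [hshift q]
  set g : ℤ×ℤ → ℂ := fun q =>
    (((2:ℝ) ^ (-(ρ * ‖latPt (q + m)‖)) : ℝ) : ℂ) * ϕ (z - latPt q) with hgdef
  have hNper : (∑' p : ℤ×ℤ,
      (Complex.ofReal ((2:ℝ) ^ (-(ρ * ‖latPt p‖)))) * ϕ (w - latPt p))
      = ∑' q : ℤ×ℤ, g q := by
    have h := (Equiv.addRight m).tsum_eq (fun p : ℤ×ℤ =>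
      (Complex.ofReal ((2:ℝ) ^ (-(ρ * ‖latPt p‖)))) * ϕ (w - latPt p))
    rw [← h]
    apply tsum_congr
    intro q
    simp only [Equiv.coe_addRight, hgdef]
    rw [hshift q]
  have hgnorm : ∀ q : ℤ×ℤ, ‖g q‖
      = (2:ℝ) ^ (-(ρ * ‖latPt (q + m)‖)) * ‖ϕ (z - latPt q)‖ := by
    intro q
    simp only [hgdef, norm_mul, Complex.norm_real, Real.norm_eq_abs]
    rw [abs_of_pos (Real.rpow_pos_of_pos (by norm_num) _)]
  have hcoeff0 : ∀ q : ℤ×ℤ, (0:ℝ) < (2:ℝ) ^ (-(ρ * ‖latPt (q + m)‖)) :=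
    fun q => Real.rpow_pos_of_pos (by norm_num) _
  have hcoeff1 : ∀ q : ℤ×ℤ, (2:ℝ) ^ (-(ρ * ‖latPt (q + m)‖)) ≤ 1 := by
    intro q
    calc (2:ℝ) ^ (-(ρ * ‖latPt (q + m)‖)) ≤ (2:ℝ) ^ (0:ℝ) := by
          apply Real.rpow_le_rpow_of_exponent_le one_le_two
          have : (0:ℝ) ≤ ρ * ‖latPt (q + m)‖ := by positivity
          linarith
      _ = 1 := Real.rpow_zero 2
  have hgnorm_sum : Summable (fun q : ℤ×ℤ => ‖g q‖) := by
    apply Summable.of_nonneg_of_le (fun q => norm_nonneg _) _ hsz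
    intro q
    rw [hgnorm q]
    calc (2:ℝ) ^ (-(ρ * ‖latPt (q + m)‖)) * ‖ϕ (z - latPt q)‖
        ≤ 1 * ‖ϕ (z - latPt q)‖ :=
          mul_le_mul_of_nonneg_right (hcoeff1 q) (norm_nonneg _)
      _ = ‖ϕ (z - latPt q)‖ := one_mul _
  have hgsum : Summable g := by
    apply Summable.of_norm
    simpa using hgnorm_sum
  obtain ⟨hmsum, hmle⟩ := master hb hCb hkey hρ0 hρ1 m
  set M := ‖latPt m‖ with hMdef
  have hM0 : (0:ℝ) ≤ M := norm_nonneg _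
  set P := ρ^(-b) * (1 + M)^(-b) with hPdef
  have hP0 : (0:ℝ) < P := by
    have h1 : (0:ℝ) < ρ^(-b) := Real.rpow_pos_of_pos hρ0 _
    have h2 : (0:ℝ) < (1+M)^(-b) := Real.rpow_pos_of_pos (by linarith) _
    positivity
  have hmle' : (∑' q : ℤ×ℤ, (2:ℝ) ^ (-(ρ * ‖latPt (q + m)‖)) *
      (1 + ‖latPt q‖) ^ (-b)) ≤ C₃ * P := by
    calc _ ≤ (2 * (2:ℝ)^b * Cb * T) * ρ^(-b) * (1 + M)^(-b) := hmle
      _ = C₃ * P := by rw [hC₃def, hPdef]; ring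
  -- rewrite the goal
  rw [hΨ, norm_div, hDper, hNper]
  by_cases hEx : ∃ q₀ : ℤ×ℤ, ∃ s ∈ S, dist (z - latPt q₀) s < δ
  · -- singular case
    obtain ⟨q₀, hq₀⟩ := hEx
    have hreg : ∀ q : ℤ×ℤ, q ≠ q₀ → ∀ s ∈ S, δ ≤ dist (z - latPt q) s := by
      intro q hq s hs
      by_contra h
      push_neg at h
      exact hq (hsing q q₀ ⟨s, hs, h⟩ hq₀)
    have hq₀R : ‖latPt q₀‖ ≤ R₂ := hqF q₀ hq₀
    have hsplit := Summable.tsum_eq_add_tsum_ite hgsum q₀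
    -- remaining-sum bound
    have hite_le : ∀ q : ℤ×ℤ, ‖ite (q = q₀) 0 (g q)‖
        ≤ M₂ * ((2:ℝ) ^ (-(ρ * ‖latPt (q + m)‖)) *
          (1 + ‖latPt q‖) ^ (-b)) := by
      intro q
      by_cases hq : q = q₀
      · subst hq
        rw [if_pos rfl]
        simp only [norm_zero]
        have h1 := hcoeff0 q
        have h2 : (0:ℝ) < (1 + ‖latPt q‖) ^ (-b) :=
          Real.rpow_pos_of_pos (by positivity) _
        positivity
      · rw [if_neg hq, hgnorm q]
        have h3 := hbound q (hreg q hq)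
        calc (2:ℝ) ^ (-(ρ * ‖latPt (q + m)‖)) * ‖ϕ (z - latPt q)‖
            ≤ (2:ℝ) ^ (-(ρ * ‖latPt (q + m)‖)) *
              (M₂ * (1 + ‖latPt q‖) ^ (-b)) :=
              mul_le_mul_of_nonneg_left h3 (hcoeff0 q).le
          _ = M₂ * ((2:ℝ) ^ (-(ρ * ‖latPt (q + m)‖)) *
              (1 + ‖latPt q‖) ^ (-b)) := by ring
    have hite_norm_sum : Summable (fun q : ℤ×ℤ => ‖ite (q = q₀) 0 (g q)‖) :=
      Summable.of_nonneg_of_le (fun q => norm_nonneg _) hite_le (hmsum.mul_left M₂)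
    have hrest : ‖∑' q : ℤ×ℤ, ite (q = q₀) 0 (g q)‖ ≤ M₂ * (C₃ * P) := by
      have h1 : ‖∑' q : ℤ×ℤ, ite (q = q₀) 0 (g q)‖
          ≤ ∑' q : ℤ×ℤ, ‖ite (q = q₀) 0 (g q)‖ := by
        apply norm_tsum_le_tsum_norm
        simpa using hite_norm_sum
      calc ‖∑' q : ℤ×ℤ, ite (q = q₀) 0 (g q)‖
          ≤ ∑' q : ℤ×ℤ, ‖ite (q = q₀) 0 (g q)‖ := by
            simpa using h1
        _ ≤ ∑' q : ℤ×ℤ, M₂ * ((2:ℝ) ^ (-(ρ * ‖latPt (q + m)‖)) *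
              (1 + ‖latPt q‖) ^ (-b)) :=
            Summable.tsum_le_tsum hite_le hite_norm_sum (hmsum.mul_left M₂)
        _ = M₂ * ∑' q : ℤ×ℤ, ((2:ℝ) ^ (-(ρ * ‖latPt (q + m)‖)) *
              (1 + ‖latPt q‖) ^ (-b)) := tsum_mul_left
        _ ≤ M₂ * (C₃ * P) := mul_le_mul_of_nonneg_left hmle' hM₂0.le
    -- bound |ϕ(z - latPt q₀)|
    have hDsplit := Summable.tsum_eq_add_tsum_ite hszC q₀
    have hphirest : ‖∑' q : ℤ×ℤ, ite (q = q₀) 0 (ϕ (z - latPt q))‖ ≤ M₂ * T := by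
      have hle : ∀ q : ℤ×ℤ, ‖ite (q = q₀) 0 (ϕ (z - latPt q))‖
          ≤ M₂ * (1 + ‖latPt q‖) ^ (-b) := by
        intro q
        by_cases hq : q = q₀
        · rw [if_pos hq]
          have h2 : (0:ℝ) < (1 + ‖latPt q‖) ^ (-b) :=
            Real.rpow_pos_of_pos (by positivity) _
          simp only [norm_zero]
          positivity
        · rw [if_neg hq]
          exact hbound q (hreg q hq)
      have hsab : Summable (fun q : ℤ×ℤ => ‖ite (q = q₀) 0 (ϕ (z - latPt q))‖) :=
        Summable.of_nonneg_of_le (fun q => norm_nonneg _) hle (hTsum.mul_left M₂)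
      have h1 : ‖∑' q : ℤ×ℤ, ite (q = q₀) 0 (ϕ (z - latPt q))‖
          ≤ ∑' q : ℤ×ℤ, ‖ite (q = q₀) 0 (ϕ (z - latPt q))‖ := by
        apply norm_tsum_le_tsum_norm
        simpa using hsab
      calc ‖∑' q : ℤ×ℤ, ite (q = q₀) 0 (ϕ (z - latPt q))‖
          ≤ ∑' q : ℤ×ℤ, ‖ite (q = q₀) 0 (ϕ (z - latPt q))‖ := by
            simpa using h1
        _ ≤ ∑' q : ℤ×ℤ, M₂ * (1 + ‖latPt q‖) ^ (-b) :=
            Summable.tsum_le_tsum hle hsab (hTsum.mul_left M₂)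
        _ = M₂ * T := by rw [tsum_mul_left]
    have hphiq₀ : ‖ϕ (z - latPt q₀)‖ ≤ ‖Dz‖ + M₂ * T := by
      have heq : ϕ (z - latPt q₀)
          = Dz - ∑' q : ℤ×ℤ, ite (q = q₀) 0 (ϕ (z - latPt q)) := by
        rw [hDzdef, hDsplit]; ring
      rw [heq]
      calc ‖Dz - ∑' q : ℤ×ℤ, ite (q = q₀) 0 (ϕ (z - latPt q))‖
          ≤ ‖Dz‖ + ‖∑' q : ℤ×ℤ, ite (q = q₀) 0 (ϕ (z - latPt q))‖ :=
            norm_sub_le _ _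
        _ ≤ ‖Dz‖ + M₂ * T := by linarith
    -- coefficient bound
    have h1q₀ : M - R₂ ≤ ‖latPt (q₀ + m)‖ := by
      rw [latPt_add]
      have h2 := norm_sub_le (latPt q₀ + latPt m) (latPt q₀)
      simp only [add_sub_cancel_left] at h2
      rw [hMdef]
      linarith
    have hco : (2:ℝ) ^ (-(ρ * ‖latPt (q₀ + m)‖)) ≤ (2:ℝ)^R₂ * Cb * P := by
      have hx := mul_le_mul_of_nonneg_left h1q₀ hρ0.le
      have h4 : -(ρ * ‖latPt (q₀ + m)‖) ≤ ρ * R₂ - ρ * M := by nlinarith [hx]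
      have c1 : (2:ℝ) ^ (-(ρ * ‖latPt (q₀ + m)‖)) ≤ (2:ℝ) ^ (ρ * R₂ - ρ * M) :=
        Real.rpow_le_rpow_of_exponent_le one_le_two h4
      have c2 : (2:ℝ) ^ (ρ * R₂ - ρ * M) = (2:ℝ) ^ (ρ * R₂) * (2:ℝ) ^ (-(ρ * M)) := by
        rw [← Real.rpow_add (by norm_num : (0:ℝ) < 2)]; ring_nf
      have c3 : (2:ℝ) ^ (ρ * R₂) ≤ (2:ℝ) ^ R₂ :=
        Real.rpow_le_rpow_of_exponent_le one_le_two
          (by nlinarith [mul_le_mul_of_nonneg_right hρ1 hR₂0.le])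
      have c4 : (2:ℝ) ^ (-(ρ * M)) ≤ Cb * (1 + ρ * M)^(-b) := hkey _ (by positivity)
      have c5 : (1 + ρ * M)^(-b) ≤ ρ^(-b) * (1 + M)^(-b) := key2 hρ0 hρ1 hM0 (by linarith)
      have p2 : (0:ℝ) < (2:ℝ) ^ R₂ := Real.rpow_pos_of_pos (by norm_num) _
      have p3 : (0:ℝ) < (2:ℝ) ^ (-(ρ * M)) := Real.rpow_pos_of_pos (by norm_num) _
      calc (2:ℝ) ^ (-(ρ * ‖latPt (q₀ + m)‖))
          ≤ (2:ℝ) ^ (ρ * R₂ - ρ * M) := c1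
        _ = (2:ℝ) ^ (ρ * R₂) * (2:ℝ) ^ (-(ρ * M)) := c2
        _ ≤ (2:ℝ) ^ R₂ * (Cb * (1 + ρ * M)^(-b)) := mul_le_mul c3 c4 p3.le p2.le
        _ ≤ (2:ℝ) ^ R₂ * (Cb * (ρ^(-b) * (1 + M)^(-b))) :=
            mul_le_mul_of_nonneg_left (mul_le_mul_of_nonneg_left c5 hCb0.le) p2.le
        _ = (2:ℝ)^R₂ * Cb * P := by rw [hPdef]; ring
    have hco0 : (0:ℝ) < (2:ℝ) ^ (-(ρ * ‖latPt (q₀ + m)‖)) := hcoeff0 q₀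
    -- numerator bound
    have hNle : ‖∑' q : ℤ×ℤ, g q‖
        ≤ (2:ℝ) ^ (-(ρ * ‖latPt (q₀ + m)‖)) * ‖Dz‖ +
          ((2:ℝ) ^ (-(ρ * ‖latPt (q₀ + m)‖)) * (M₂ * T) + M₂ * (C₃ * P)) := by
      rw [hsplit]
      have hgq₀ : ‖g q₀‖
          ≤ (2:ℝ) ^ (-(ρ * ‖latPt (q₀ + m)‖)) * (‖Dz‖ + M₂ * T) := by
        rw [hgnorm q₀]
        exact mul_le_mul_of_nonneg_left hphiq₀ hco0.le
      calc ‖g q₀ + ∑' q : ℤ×ℤ, ite (q = q₀) 0 (g q)‖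
          ≤ ‖g q₀‖ + ‖∑' q : ℤ×ℤ, ite (q = q₀) 0 (g q)‖ :=
            norm_add_le _ _
        _ ≤ (2:ℝ) ^ (-(ρ * ‖latPt (q₀ + m)‖)) * (‖Dz‖ + M₂ * T)
            + M₂ * (C₃ * P) := by linarith
        _ = _ := by ring
    -- final division
    set co := (2:ℝ) ^ (-(ρ * ‖latPt (q₀ + m)‖)) with hcodef
    set Y := co * (M₂ * T) + M₂ * (C₃ * P) with hYdef
    have hY0 : (0:ℝ) ≤ Y := by
      have := hco0
      positivity
    have hstep : ‖∑' q : ℤ×ℤ, g q‖ / ‖Dz‖ ≤ co + Y / c := by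
      calc ‖∑' q : ℤ×ℤ, g q‖ / ‖Dz‖
          ≤ (co * ‖Dz‖ + Y) / ‖Dz‖ :=
            (div_le_div_iff_of_pos_right habsDz0).mpr hNle
        _ = co + Y / ‖Dz‖ := by
            field_simp
        _ ≤ co + Y / c := by
            have := div_le_div_of_nonneg_left hY0 hc hDc
            linarith
    calc ‖∑' q : ℤ×ℤ, g q‖ / ‖Dz‖ ≤ co + Y / c := hstep
      _ ≤ (2:ℝ)^R₂ * Cb * P + ((2:ℝ)^R₂ * Cb * P * (M₂ * T) + M₂ * (C₃ * P)) / c := by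
          have hmono : Y ≤ (2:ℝ)^R₂ * Cb * P * (M₂ * T) + M₂ * (C₃ * P) := by
            rw [hYdef]
            have : co * (M₂ * T) ≤ (2:ℝ)^R₂ * Cb * P * (M₂ * T) :=
              mul_le_mul_of_nonneg_right hco (by positivity)
            linarith
          have h2 := (div_le_div_iff_of_pos_right hc).mpr hmono
          linarith
      _ = C * ρ^(-b) * (1 + M)^(-b) := by
          rw [hCdef, hPdef]
          field_simp
          ring
  · -- regular case
    push_neg at hEx
    have hregall : ∀ q : ℤ×ℤ, ∀ s ∈ S, δ ≤ dist (z - latPt q) s := by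
      intro q s hs
      exact le_of_not_gt (by intro h; exact absurd h (by simpa using hEx q s hs))
    have hNle : ‖∑' q : ℤ×ℤ, g q‖ ≤ M₂ * (C₃ * P) := by
      have h1 : ‖∑' q : ℤ×ℤ, g q‖ ≤ ∑' q : ℤ×ℤ, ‖g q‖ := by
        apply norm_tsum_le_tsum_norm
        simpa using hgnorm_sum
      have hle : ∀ q : ℤ×ℤ, ‖g q‖
          ≤ M₂ * ((2:ℝ) ^ (-(ρ * ‖latPt (q + m)‖)) *
            (1 + ‖latPt q‖) ^ (-b)) := by
        intro q
        rw [hgnorm q]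
        have h3 := hbound q (hregall q)
        calc (2:ℝ) ^ (-(ρ * ‖latPt (q + m)‖)) * ‖ϕ (z - latPt q)‖
            ≤ (2:ℝ) ^ (-(ρ * ‖latPt (q + m)‖)) *
              (M₂ * (1 + ‖latPt q‖) ^ (-b)) :=
              mul_le_mul_of_nonneg_left h3 (hcoeff0 q).le
          _ = M₂ * ((2:ℝ) ^ (-(ρ * ‖latPt (q + m)‖)) *
              (1 + ‖latPt q‖) ^ (-b)) := by ring
      calc ‖∑' q : ℤ×ℤ, g q‖ ≤ ∑' q : ℤ×ℤ, ‖g q‖ := by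
            simpa using h1
        _ ≤ ∑' q : ℤ×ℤ, M₂ * ((2:ℝ) ^ (-(ρ * ‖latPt (q + m)‖)) *
              (1 + ‖latPt q‖) ^ (-b)) :=
            Summable.tsum_le_tsum hle hgnorm_sum (hmsum.mul_left M₂)
        _ = M₂ * ∑' q : ℤ×ℤ, ((2:ℝ) ^ (-(ρ * ‖latPt (q + m)‖)) *
              (1 + ‖latPt q‖) ^ (-b)) := tsum_mul_left
        _ ≤ M₂ * (C₃ * P) := mul_le_mul_of_nonneg_left hmle' hM₂0.le
    calc ‖∑' q : ℤ×ℤ, g q‖ / ‖Dz‖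
        ≤ (M₂ * (C₃ * P)) / c :=
          div_le_div₀ (by positivity) hNle hc hDc
      _ ≤ C * ρ^(-b) * (1 + M)^(-b) := by
          rw [hCdef, hPdef]
          have h2R : (0:ℝ) < (2:ℝ)^R₂ := Real.rpow_pos_of_pos (by norm_num) _
          have hρb : (0:ℝ) < ρ^(-b) := Real.rpow_pos_of_pos hρ0 _
          have hMb : (0:ℝ) < (1+M)^(-b) := Real.rpow_pos_of_pos (by linarith) _
          have hterm : (0:ℝ) ≤ (2:ℝ)^R₂ * Cb * (1 + M₂*T/c) * (ρ^(-b) * (1+M)^(-b)) := by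
            have : (0:ℝ) < 1 + M₂*T/c := by positivity
            positivity
          have hexp : M₂ * (C₃ * (ρ^(-b) * (1+M)^(-b))) / c
              = (M₂*C₃/c) * (ρ^(-b) * (1+M)^(-b)) := by ring
          rw [hexp]
          nlinarith [hterm]

/-- the decay estimate `|Ψ_ρ(z+m)| ≤ C_K ρ^{-b} (1+|m|)^{-b}` on compact sets. -/
theorem stmt5
    (Ω : Set ℂ) (hΩopen : IsOpen Ω) (hΩne : Ω.Nonempty)
    (hper : ∀ z ∈ Ω, ∀ p : ℤ × ℤ, z + latPt p ∈ Ω)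
    (S : Finset ℂ) (hSQ : (S : Set ℂ) ⊆ QSet)
    (ϕ : ℂ → ℂ) (hmero : MeromorphicOn ϕ Set.univ)
    (hana : AnalyticOnNhd ℂ ϕ ((S : Set ℂ)ᶜ))
    (b d : ℝ) (hb : 2 < b) (hd : 0 ≤ d)
    (hdecay : ∀ z ∈ Ω, z ∉ closure QSet →
      (1 + ‖z‖) ^ b * ‖ϕ z‖ ≤ d)
    (hsum : ∀ z ∈ Ω \ SLat S,
      Summable (fun p : ℤ × ℤ => ‖ϕ (z - latPt p)‖))
    (hnz : ∀ z ∈ closure Ω \ SLat S, (∑' p : ℤ × ℤ, ϕ (z - latPt p)) ≠ 0)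
    (hlb : ∃ c > (0:ℝ), ∀ z ∈ Ω \ SLat S,
      c ≤ ‖∑' p : ℤ × ℤ, ϕ (z - latPt p)‖)
    (Ψ : ℝ → ℂ → ℂ)
    (hΨana : ∀ ρ ∈ Set.Ioc (0:ℝ) 1, AnalyticOnNhd ℂ (Ψ ρ) Ω)
    (hΨeq : ∀ ρ ∈ Set.Ioc (0:ℝ) 1, ∀ z ∈ Ω \ SLat S,
      Ψ ρ z = (∑' p : ℤ × ℤ,
          (Complex.ofReal ((2:ℝ) ^ (-(ρ * ‖latPt p‖)))) * ϕ (z - latPt p)) /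
        (∑' p : ℤ × ℤ, ϕ (z - latPt p)))
    (K : Set ℂ) (hK : IsCompact K) :
    ∃ C > (0:ℝ), ∀ ρ ∈ Set.Ioc (0:ℝ) 1, ∀ p : ℤ × ℤ, ∀ z ∈ K ∩ Ω,
      ‖Ψ ρ (z + latPt p)‖ ≤
        C * ρ ^ (-b) * (1 + ‖latPt p‖) ^ (-b) := by
  obtain ⟨c, hc, hlbc⟩ := hlb
  obtain ⟨R₀, hR₀⟩ := hK.isBounded.subset_closedBall 0
  set R₁ : ℝ := |R₀| + 1 with hR₁def
  have hR₁ : 1 ≤ R₁ := by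
    have := abs_nonneg R₀
    rw [hR₁def]; linarith
  obtain ⟨C, hC0, hP⟩ := Pbound Ω hper S hSQ ϕ hana b d hb hd hdecay hsum c hc hlbc Ψ hΨeq R₁ hR₁
  refine ⟨C, hC0, ?_⟩
  rintro ρ hρ m z ⟨hzK, hzΩ⟩
  have hdense : Dense (SLat S)ᶜ := slat_dense_compl S
  have hclos : z ∈ closure (Ω \ SLat S) := by
    rw [mem_closure_iff]
    intro O hO hzO
    obtain ⟨y, hy⟩ := hdense.inter_open_nonempty (O ∩ Ω) (hO.inter hΩopen) ⟨z, hzO, hzΩ⟩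
    exact ⟨y, hy.1.1, hy.1.2, hy.2⟩
  have hne : (𝓝[Ω \ SLat S] z).NeBot := mem_closure_iff_nhdsWithin_neBot.mp hclos
  have hcont : ContinuousAt (fun z' => ‖Ψ ρ (z' + latPt m)‖) z := by
    have h1 : ContinuousAt (fun z' : ℂ => z' + latPt m) z :=
      (continuous_add_right (latPt m)).continuousAt
    have h2 : ContinuousAt (Ψ ρ) (z + latPt m) :=
      ((hΨana ρ hρ) _ (hper z hzΩ m)).continuousAt
    exact continuous_norm.continuousAt.comp (ContinuousAt.comp (g := Ψ ρ) h2 h1)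
  have htend : Filter.Tendsto (fun z' => ‖Ψ ρ (z' + latPt m)‖)
      (𝓝[Ω \ SLat S] z) (𝓝 (‖Ψ ρ (z + latPt m)‖)) :=
    hcont.continuousWithinAt
  apply le_of_tendsto htend
  have hball : Metric.ball z 1 ∈ 𝓝[Ω \ SLat S] z :=
    nhdsWithin_le_nhds (Metric.ball_mem_nhds z one_pos)
  filter_upwards [hball, self_mem_nhdsWithin] with z' hz1 hz2
  apply hP ρ hρ m z' ?_ hz2.1 hz2.2
  have hd1 : dist z' z < 1 := Metric.mem_ball.mp hz1
  have hd2 : ‖z‖ ≤ R₀ := by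
    have := hR₀ hzK
    simpa using Metric.mem_closedBall.mp this
  have : ‖z'‖ = dist z' 0 := by
    simp [Complex.dist_eq]
  rw [this]
  calc dist z' (0:ℂ) ≤ dist z' z + dist z (0:ℂ) := dist_triangle _ _ _
    _ ≤ 1 + R₀ := by
        have : dist z (0:ℂ) = ‖z‖ := by simp [Complex.dist_eq]
        rw [this]; linarith
    _ ≤ R₁ := by
        have := le_abs_self R₀
        rw [hR₁def]; linarith
end
end
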